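/- arXiv:2004.07452 — 4 statements merged into one kernel-verified Lean document; each statement's English description precedes it below -/
import Mathlib

section
/- Let G be a graph on n vertices with Laplacian characteristic polynomial χ_G(λ) = det(λI − L(G)) = λⁿ + c_{n−1}λ^{n−1} + … + c₁λ. Then for each k, the absolute value of the coefficient c_k equals the number of rooted spanning k-forests of G (spanning forests with exactly k tree components, each with a chosen root). -/
open SimpleGraph

open scoped Classical in
/-- The Laplacian matrix of `G` with integer entries. -/
noncomputable def lap {V : Type*} [Fintype V] (G : SimpleGraph V) : Matrix V V ℤ :=
  G.lapMatrix ℤ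

/-- A rooted spanning `k`-forest of `G`: a spanning acyclic subgraph with exactly `k`
connected components, together with a set of roots containing exactly one vertex of
each connected component. -/
def RootedSpanningKForest {V : Type*} (G : SimpleGraph V) (k : ℕ) : Type _ :=
  {p : SimpleGraph V × Set V // p.1 ≤ G ∧ p.1.IsAcyclic ∧
    Nat.card p.1.ConnectedComponent = k ∧
    ∀ c : p.1.ConnectedComponent, ∃! v, v ∈ p.2 ∧ p.1.connectedComponentMk v = c}

namespace ForestProof

open Matrix Polynomial Finset

set_option linter.unusedSectionVars false

variable {V : Type*} [Fintype V] [DecidableEq V]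

/-! ### Partial parent maps and their iterates -/

/-- `n`-fold iterate of a partial map. -/
def iter (r : V → Option V) : ℕ → V → Option V
  | 0, v => some v
  | n+1, v => (r v).bind (iter r n)

@[simp] lemma iter_zero (r : V → Option V) (v : V) : iter r 0 v = some v := rfl

lemma iter_succ (r : V → Option V) (n : ℕ) (v : V) :
    iter r (n+1) v = (r v).bind (iter r n) := rfl

lemma iter_add (r : V → Option V) (m n : ℕ) (v : V) :
    iter r (m+n) v = (iter r m v).bind (iter r n) := by
  induction m generalizing v with
  | zero => simp
  | succ m ih =>
    have : m + 1 + n = (m + n) + 1 := by omega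
    rw [this, iter_succ, iter_succ]
    cases r v with
    | none => simp
    | some w => simp [ih]

/-- A partial map has a cycle if some positive iterate returns to its start. -/
def HasCycle (r : V → Option V) : Prop := ∃ v m, 0 < m ∧ iter r m v = some v

lemma iter_eq_none_of_le {r : V → Option V} {m n : ℕ} (h : m ≤ n) {v : V}
    (hm : iter r m v = none) : iter r n v = none := by
  obtain ⟨p, rfl⟩ := Nat.exists_eq_add_of_le h
  rw [iter_add, hm]; rfl

lemma cycle_of_iter_eq {r : V → Option V} {i j : ℕ} {v u : V} (hij : i < j)
    (hi : iter r i v = some u) (hj : iter r j v = some u) : HasCycle r := by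
  refine ⟨u, j - i, by omega, ?_⟩
  have : j = i + (j - i) := by omega
  rw [this, iter_add, hi] at hj
  exact hj

/-- Without cycles, all iterates eventually die. -/
lemma exists_iter_none {r : V → Option V} (h : ¬ HasCycle r) (v : V) :
    ∃ m, iter r m v = none := by
  by_contra hc
  push_neg at hc
  have hsome : ∀ m, ∃ u, iter r m v = some u := by
    intro m
    cases hm : iter r m v with
    | none => exact absurd hm (hc m)
    | some u => exact ⟨u, rfl⟩
  choose f hf using hsome
  have : ¬ Function.Injective (fun i : Fin (Fintype.card V + 1) => f i) := by
    intro hinj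
    have := Fintype.card_le_of_injective _ hinj
    simp at this
  rw [Function.not_injective_iff] at this
  obtain ⟨i, j, hfe, hne⟩ := this
  rcases Ne.lt_or_gt hne with hlt | hlt
  · exact h (cycle_of_iter_eq hlt (hf i) (hfe ▸ hf j))
  · exact h (cycle_of_iter_eq hlt (hf j) (hfe ▸ hf i))

variable {r : V → Option V}

/-- The depth of a vertex: the least `m` with `iter r m v = none`. -/
noncomputable def dep (h : ¬ HasCycle r) (v : V) : ℕ := Nat.find (exists_iter_none h v)

lemma iter_dep (h : ¬ HasCycle r) (v : V) : iter r (dep h v) v = none :=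
  Nat.find_spec (exists_iter_none h v)

lemma dep_pos (h : ¬ HasCycle r) (v : V) : 0 < dep h v := by
  rcases Nat.eq_zero_or_pos (dep h v) with h0 | h0
  · exfalso; have := iter_dep h v; rw [h0] at this; simp at this
  · exact h0

lemma iter_ne_none_of_lt_dep (h : ¬ HasCycle r) {m : ℕ} {v : V} (hm : m < dep h v) :
    iter r m v ≠ none :=
  Nat.find_min (exists_iter_none h v) hm

lemma dep_eq_one (h : ¬ HasCycle r) {v : V} (hv : r v = none) : dep h v = 1 := by
  have h1 : iter r 1 v = none := by rw [iter_succ, hv]; rfl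
  have h2 : dep h v ≤ 1 := Nat.find_le h1
  have h3 := dep_pos h v
  omega

lemma dep_succ (h : ¬ HasCycle r) {v w : V} (hv : r v = some w) :
    dep h v = dep h w + 1 := by
  have key : ∀ m, iter r (m+1) v = iter r m w := by
    intro m; rw [iter_succ, hv]; rfl
  have h1 : iter r (dep h w + 1) v = none := by rw [key]; exact iter_dep h w
  have h2 : dep h v ≤ dep h w + 1 := Nat.find_le h1
  have h4 : dep h w + 1 ≤ dep h v := by
    by_contra hcon
    push_neg at hcon
    have hle : dep h v ≤ dep h w := by omega
    have hpos := dep_pos h v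
    have hlt : dep h v - 1 < dep h w := by omega
    have h5 : iter r (dep h v) v = none := iter_dep h v
    have h6 : dep h v = (dep h v - 1) + 1 := by omega
    rw [h6, key] at h5
    exact iter_ne_none_of_lt_dep h hlt h5
  omega

lemma dep_lt (h : ¬ HasCycle r) {v w : V} (hv : r v = some w) : dep h w < dep h v := by
  rw [dep_succ h hv]; omega

lemma iter_dep_pred_isSome (h : ¬ HasCycle r) (v : V) :
    (iter r (dep h v - 1) v).isSome := by
  cases hm : iter r (dep h v - 1) v with
  | none =>
    exact absurd hm (iter_ne_none_of_lt_dep h (by have := dep_pos h v; omega))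
  | some u => rfl

/-- The root reached from `v` by iterating `r`. -/
noncomputable def root (h : ¬ HasCycle r) (v : V) : V :=
  (iter r (dep h v - 1) v).get (iter_dep_pred_isSome h v)

lemma iter_root (h : ¬ HasCycle r) (v : V) :
    iter r (dep h v - 1) v = some (root h v) := by
  simp [root]

lemma r_root (h : ¬ HasCycle r) (v : V) : r (root h v) = none := by
  have h1 : iter r (dep h v - 1 + 1) v = none := by
    have : dep h v - 1 + 1 = dep h v := by have := dep_pos h v; omega
    rw [this]; exact iter_dep h v
  rw [iter_add, iter_root] at h1
  simpa [iter_succ, show iter r 0 = some from rfl] using h1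

lemma root_eq_self (h : ¬ HasCycle r) {v : V} (hv : r v = none) : root h v = v := by
  have h0 : dep h v - 1 = 0 := by rw [dep_eq_one h hv]
  have h1 := iter_root h v
  rw [h0] at h1
  simpa using h1.symm

lemma root_eq_of_parent (h : ¬ HasCycle r) {v w : V} (hv : r v = some w) :
    root h v = root h w := by
  have h1 : iter r (dep h v - 1) v = iter r (dep h w - 1) w := by
    rw [dep_succ h hv]
    simp only [Nat.add_sub_cancel]
    have : dep h w = dep h w - 1 + 1 := by have := dep_pos h w; omega
    conv_lhs => rw [this]
    rw [Nat.add_comm, iter_add, iter_succ, hv]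
    rfl
  have := iter_root h v
  rw [h1, iter_root h w] at this
  exact (Option.some_injective _ this).symm

/-! ### The forest associated to a parent map -/

/-- The spanning subgraph whose edges are `{v, r v}`. -/
def forest (r : V → Option V) : SimpleGraph V :=
  SimpleGraph.fromRel (fun v w => r v = some w)

lemma forest_adj (r : V → Option V) (v w : V) :
    (forest r).Adj v w ↔ v ≠ w ∧ (r v = some w ∨ r w = some v) :=
  SimpleGraph.fromRel_adj _ v w

lemma ne_of_parent (h : ¬ HasCycle r) {v w : V} (hv : r v = some w) : v ≠ w := by
  rintro rfl
  exact h ⟨v, 1, one_pos, by simp [iter_succ, hv]⟩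

lemma forest_adj_of_parent (h : ¬ HasCycle r) {v w : V} (hv : r v = some w) :
    (forest r).Adj v w :=
  (forest_adj r v w).mpr ⟨ne_of_parent h hv, Or.inl hv⟩

lemma root_eq_of_adj (h : ¬ HasCycle r) {v w : V} (ha : (forest r).Adj v w) :
    root h v = root h w := by
  rcases ((forest_adj r v w).mp ha).2 with hv | hw
  · exact root_eq_of_parent h hv
  · exact (root_eq_of_parent h hw).symm

lemma root_eq_of_reachable (h : ¬ HasCycle r) {v w : V}
    (hr : (forest r).Reachable v w) : root h v = root h w := by
  obtain ⟨p⟩ := hr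
  induction p with
  | nil => rfl
  | cons ha _ ih => exact (root_eq_of_adj h ha).trans ih

/-- From any vertex there is a path to its root, along which the depth does not
increase, and whose second vertex is the parent. -/
lemma exists_good_path (h : ¬ HasCycle r) (v : V) :
    ∃ p : (forest r).Walk v (root h v), p.IsPath ∧
      (∀ u ∈ p.support, dep h u ≤ dep h v) ∧
      (∀ w, r v = some w → p.getVert 1 = w) := by
  suffices H : ∀ d v, dep h v = d → ∃ p : (forest r).Walk v (root h v), p.IsPath ∧
      (∀ u ∈ p.support, dep h u ≤ dep h v) ∧
      (∀ w, r v = some w → p.getVert 1 = w) from H (dep h v) v rfl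
  intro d
  induction d using Nat.strong_induction_on with
  | _ d ih =>
  intro v hd
  subst hd
  cases hv : r v with
  | none =>
    refine ⟨SimpleGraph.Walk.nil.copy rfl (root_eq_self h hv).symm, by simp, ?_, by simp [hv]⟩
    intro u hu
    simp only [SimpleGraph.Walk.support_copy, SimpleGraph.Walk.support_nil,
      List.mem_singleton] at hu
    subst hu
    exact le_refl _
  | some w =>
    obtain ⟨q, hq, hqs, _⟩ := ih (dep h w) (dep_lt h hv) w rfl
    have hvq : v ∉ q.support := fun hmem =>
      absurd (hqs v hmem) (by have := dep_lt h hv; omega)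
    refine ⟨(SimpleGraph.Walk.cons (forest_adj_of_parent h hv) q).copy rfl
      (root_eq_of_parent h hv).symm, ?_, ?_, ?_⟩
    · rw [SimpleGraph.Walk.isPath_copy]
      exact hq.cons hvq
    · intro u hu
      simp only [SimpleGraph.Walk.support_copy, SimpleGraph.Walk.support_cons,
        List.mem_cons] at hu
      rcases hu with rfl | hu
      · exact le_refl _
      · exact (hqs u hu).trans (le_of_lt (dep_lt h hv))
    · intro w' hw'
      injection hw' with hw''
      subst hw''
      simp [SimpleGraph.Walk.getVert_copy, SimpleGraph.Walk.getVert_cons_succ]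

lemma reachable_root (h : ¬ HasCycle r) (v : V) : (forest r).Reachable v (root h v) := by
  obtain ⟨p, _, _, _⟩ := exists_good_path h v
  exact ⟨p⟩

/-! ### Acyclicity of the forest -/

lemma forest_isAcyclic (h : ¬ HasCycle r) : (forest r).IsAcyclic := by
  intro v c hc
  -- the vertex set and edge set of the cycle
  classical
  have hlen := hc.three_le_length
  -- v appears in the tail of the support
  have hv_tail : v ∈ c.support.tail := by
    cases c with
    | nil => simp at hlen
    | cons ha c' => simpa using c'.end_mem_support
  have hmem_tail : ∀ u : V, u ∈ c.support → u ∈ c.support.tail := by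
    intro u hu
    rcases (SimpleGraph.Walk.mem_support_iff _).mp hu with rfl | hu
    · exact hv_tail
    · exact hu
  set Vc : Finset V := c.support.tail.toFinset with hVc
  set Ec : Finset (Sym2 V) := c.edges.toFinset with hEc
  have hcardV : Vc.card = c.length := by
    rw [hVc, List.toFinset_card_of_nodup hc.support_nodup]
    simp [SimpleGraph.Walk.length_support]
  have hcardE : Ec.card = c.length := by
    rw [hEc, List.toFinset_card_of_nodup hc.edges_nodup]
    simp [SimpleGraph.Walk.length_edges]
  -- each edge has a distinguished endpoint from which `r` crosses it
  have hchoice : ∀ e ∈ Ec, ∃ a, ∃ b, e = s(a, b) ∧ r a = some b := by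
    intro e he
    rw [hEc, List.mem_toFinset] at he
    have hadj := c.edges_subset_edgeSet he
    induction e with
    | h a b =>
      rw [SimpleGraph.mem_edgeSet, forest_adj] at hadj
      rcases hadj.2 with h1 | h1
      · exact ⟨a, b, rfl, h1⟩
      · exact ⟨b, a, Sym2.eq_swap, h1⟩
  set f : ∀ e ∈ Ec, V := fun e he => (hchoice e he).choose with hf
  have hfspec : ∀ e he, ∃ b, e = s(f e he, b) ∧ r (f e he) = some b :=
    fun e he => (hchoice e he).choose_spec
  have hfmem : ∀ e he, f e he ∈ Vc := by
    intro e he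
    obtain ⟨b, hb, _⟩ := hfspec e he
    rw [hVc, List.mem_toFinset]
    apply hmem_tail
    apply SimpleGraph.Walk.fst_mem_support_of_mem_edges c
    rw [← hb]
    rw [hEc, List.mem_toFinset] at he
    exact he
  have hfinj : ∀ e₁ e₂ (he₁ : e₁ ∈ Ec) (he₂ : e₂ ∈ Ec), f e₁ he₁ = f e₂ he₂ → e₁ = e₂ := by
    intro e₁ e₂ he₁ he₂ heq
    obtain ⟨b₁, hb₁, hr₁⟩ := hfspec e₁ he₁
    obtain ⟨b₂, hb₂, hr₂⟩ := hfspec e₂ he₂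
    rw [heq] at hb₁ hr₁
    rw [hr₂] at hr₁
    have hb : b₂ = b₁ := Option.some_injective _ hr₁
    rw [hb₁, ← hb]
    exact hb₂.symm
  have hsurj := Finset.surj_on_of_inj_on_of_card_le f hfmem hfinj (le_of_eq (hcardV.trans hcardE.symm))
  -- every vertex of the cycle has its parent in the cycle
  have hstep : ∀ u ∈ Vc, ∃ w ∈ Vc, r u = some w := by
    intro u hu
    obtain ⟨e, he, hue⟩ := hsurj u hu
    obtain ⟨b, hb, hrb⟩ := hfspec e he
    refine ⟨b, ?_, hue ▸ hrb⟩
    rw [hVc, List.mem_toFinset]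
    apply hmem_tail
    apply SimpleGraph.Walk.snd_mem_support_of_mem_edges c
    rw [← hb]
    rw [hEc, List.mem_toFinset] at he
    exact he
  -- hence iterates never die, contradiction
  have hiter : ∀ m, ∀ u ∈ Vc, ∃ w ∈ Vc, iter r m u = some w := by
    intro m
    induction m with
    | zero => intro u hu; exact ⟨u, hu, rfl⟩
    | succ m ihm =>
      intro u hu
      obtain ⟨w, hw, hrw⟩ := hstep u hu
      obtain ⟨w', hw', hw'2⟩ := ihm w hw
      exact ⟨w', hw', by rw [iter_succ, hrw]; exact hw'2⟩
  have hne : v ∈ Vc := by rw [hVc, List.mem_toFinset]; exact hv_tail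
  obtain ⟨m, hm⟩ := exists_iter_none h v
  obtain ⟨w, _, hw⟩ := hiter m v hne
  rw [hm] at hw
  cases hw

/-! ### Components and roots -/

lemma root_respects (h : ¬ HasCycle r) :
    ∀ (v w : V) (p : (forest r).Walk v w), p.IsPath → root h v = root h w :=
  fun _ _ p _ => root_eq_of_reachable h ⟨p⟩

/-- The roots are in bijection with the connected components of the forest. -/
noncomputable def rootEquiv (h : ¬ HasCycle r) :
    {v : V // r v = none} ≃ (forest r).ConnectedComponent where
  toFun v := (forest r).connectedComponentMk v
  invFun c := ⟨c.lift (root h) (root_respects h), by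
    induction c using SimpleGraph.ConnectedComponent.ind with
    | _ v => simpa using r_root h v⟩
  left_inv v := by
    ext
    simpa using root_eq_self h v.2
  right_inv c := by
    induction c using SimpleGraph.ConnectedComponent.ind with
    | _ v =>
      simpa using SimpleGraph.ConnectedComponent.sound (reachable_root h v).symm

lemma unique_root (h : ¬ HasCycle r) (c : (forest r).ConnectedComponent) :
    ∃! v, r v = none ∧ (forest r).connectedComponentMk v = c := by
  induction c using SimpleGraph.ConnectedComponent.ind with
  | _ u =>
    refine ⟨root h u, ⟨r_root h u,
      SimpleGraph.ConnectedComponent.sound (reachable_root h u).symm⟩, ?_⟩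
    rintro v ⟨hv, hc⟩
    have hreach := SimpleGraph.ConnectedComponent.exact hc
    have := root_eq_of_reachable h hreach
    rw [root_eq_self h hv] at this
    exact this

/-! ### The determinant of the parent matrix -/

/-- The unipotent-or-singular "parent matrix" of a partial map. -/
noncomputable def pmatrix (r : V → Option V) : Matrix V V (Polynomial ℤ) :=
  Matrix.of fun v w => (if w = v then 1 else 0) - (if r v = some w then 1 else 0)

lemma pmatrix_det_of_not_hasCycle (h : ¬ HasCycle r) : (pmatrix r).det = 1 := by
  have hbt : (pmatrix r).BlockTriangular (fun v => OrderDual.toDual (dep h v)) := by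
    intro i j hij
    have h1 : dep h i < dep h j := hij
    have h2 : ¬ (j = i) := fun hji => by rw [hji] at h1; omega
    have h3 : ¬ (r i = some j) := fun hr => by have := dep_lt h hr; omega
    simp [pmatrix, Matrix.of_apply, h2, h3]
  rw [hbt.det]
  apply Finset.prod_eq_one
  intro a _
  have hblock : (pmatrix r).toSquareBlock (fun v => OrderDual.toDual (dep h v)) a = 1 := by
    ext ⟨i, hi⟩ ⟨j, hj⟩
    by_cases hij : i = j
    · subst hij
      have h3 : ¬ (r i = some i) := fun hr => (ne_of_parent h hr) rfl
      simp [Matrix.toSquareBlock_def, Matrix.toSquareBlockProp, pmatrix, Matrix.of_apply, h3, Matrix.one_apply, Matrix.submatrix_apply]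
    · have hdep : dep h i = dep h j := OrderDual.toDual.injective (hi.trans hj.symm)
      have h3 : ¬ (r i = some j) := by
        intro hr
        have := dep_lt h hr
        omega
      have h2 : ¬ (j = i) := fun hji => hij hji.symm
      simp [Matrix.toSquareBlock_def, Matrix.toSquareBlockProp, pmatrix, Matrix.of_apply, h2, h3, Matrix.one_apply, hij, Matrix.submatrix_apply]
  rw [hblock, Matrix.det_one]

lemma pmatrix_det_of_hasCycle (hcyc : HasCycle r) : (pmatrix r).det = 0 := by
  classical
  obtain ⟨v₀, m', hm', hit'⟩ := hcyc
  have hex : ∃ m, 0 < m ∧ iter r m v₀ = some v₀ := ⟨m', hm', hit'⟩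
  set m := Nat.find hex with hmdef
  obtain ⟨hmpos, hmit⟩ : 0 < m ∧ iter r m v₀ = some v₀ := Nat.find_spec hex
  have hmin : ∀ i, 0 < i → i < m → iter r i v₀ ≠ some v₀ :=
    fun i h1 h2 hi => Nat.find_min hex h2 ⟨h1, hi⟩
  set c : ℕ → V := fun i => (iter r i v₀).getD v₀ with hcdef
  have hci : ∀ i ≤ m, iter r i v₀ = some (c i) := by
    intro i hi
    cases hit : iter r i v₀ with
    | none =>
      exfalso
      have := iter_eq_none_of_le hi hit
      rw [hmit] at this
      cases this
    | some u => simp [hcdef, hit]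
  have hc0 : c 0 = v₀ := by simp [hcdef]
  have hcm : c m = v₀ := by simp [hcdef, hmit]
  have hstep : ∀ i < m, r (c i) = some (c (i + 1)) := by
    intro i hi
    have h1 : iter r (i + 1) v₀ = (iter r i v₀).bind (iter r 1) := iter_add r i 1 v₀
    rw [hci i (le_of_lt hi), hci (i+1) hi] at h1
    have h2 : iter r 1 (c i) = r (c i) := by
      rw [iter_succ]
      cases r (c i) <;> rfl
    simp only [Option.bind_some] at h1
    rw [h2] at h1
    exact h1.symm
  have hinj : ∀ i ∈ Finset.range m, ∀ j ∈ Finset.range m, c i = c j → i = j := by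
    have key : ∀ i j, i < j → j < m → c i ≠ c j := by
      intro i j hij hjm hc
      have h1 : iter r (m - j) (c j) = some v₀ := by
        have h := iter_add r j (m - j) v₀
        rw [Nat.add_sub_cancel' (le_of_lt hjm), hmit, hci j (le_of_lt hjm)] at h
        simpa using h.symm
      have h2 : iter r (i + (m - j)) v₀ = some v₀ := by
        rw [iter_add, hci i (le_of_lt (lt_trans hij hjm))]
        simp only [Option.bind_some]
        rw [hc]
        exact h1
      exact hmin (i + (m - j)) (by omega) (by omega) h2
    intro i hi j hj hc
    rw [Finset.mem_range] at hi hj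
    by_contra hne
    rcases Nat.lt_or_ge i j with h | h
    · exact key i j h hj hc
    · exact key j i (by omega) hi hc.symm
  set C : Finset V := (Finset.range m).image c with hC
  have hv₀ : v₀ ∈ C := by
    rw [hC, Finset.mem_image]
    exact ⟨0, Finset.mem_range.mpr hmpos, hc0⟩
  have key : (∑ u : V, (if u ∈ C then (1 : Polynomial ℤ) else 0) • pmatrix r u) = 0 := by
    have e1 : (∑ u : V, (if u ∈ C then (1 : Polynomial ℤ) else 0) • pmatrix r u)
        = ∑ u ∈ C, pmatrix r u := by
      rw [show (∑ u : V, (if u ∈ C then (1 : Polynomial ℤ) else 0) • pmatrix r u)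
          = ∑ u : V, (if u ∈ C then pmatrix r u else 0) by
        apply Finset.sum_congr rfl
        intro u _
        split <;> simp]
      exact (Finset.sum_ite_mem _ _ _).trans (by rw [Finset.univ_inter])
    have e2 : (∑ u ∈ C, pmatrix r u) = ∑ i ∈ Finset.range m, pmatrix r (c i) :=
      Finset.sum_image hinj
    rw [e1, e2]
    funext w
    rw [Finset.sum_apply]
    have term_eq : ∀ i ∈ Finset.range m,
        pmatrix r (c i) w = (if w = c i then (1 : Polynomial ℤ) else 0)
          - (if w = c (i+1) then 1 else 0) := by
      intro i hi
      rw [Finset.mem_range] at hi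
      have : (if r (c i) = some w then (1 : Polynomial ℤ) else 0)
          = (if w = c (i+1) then 1 else 0) := by
        rw [hstep i hi]
        by_cases hw : w = c (i+1)
        · simp [hw]
        · have : ¬ (some (c (i+1)) = some w) := fun hcon =>
            hw (Option.some_injective _ hcon).symm
          simp [hw, this]
      simp only [pmatrix, Matrix.of_apply]
      rw [this]
    rw [Finset.sum_congr rfl term_eq, Finset.sum_sub_distrib]
    have tele : (∑ i ∈ Finset.range m, if w = c (i+1) then (1 : Polynomial ℤ) else 0)
        = ∑ i ∈ Finset.range m, if w = c i then (1 : Polynomial ℤ) else 0 := by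
      have h1 := Finset.sum_range_succ (fun i => if w = c i then (1 : Polynomial ℤ) else 0) m
      have h2 := Finset.sum_range_succ' (fun i => if w = c i then (1 : Polynomial ℤ) else 0) m
      rw [h1] at h2
      have : (if w = c m then (1 : Polynomial ℤ) else 0)
          = (if w = c 0 then 1 else 0) := by rw [hcm, hc0]
      rw [this] at h2
      exact (add_right_cancel h2).symm
    rw [tele, sub_self]
    rfl
  have hdet := Matrix.det_updateRow_sum (pmatrix r) v₀
    (fun u => if u ∈ C then (1 : Polynomial ℤ) else 0)
  rw [key] at hdet
  have h0 : ((pmatrix r).updateRow v₀ 0).det = 0 := by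
    apply Matrix.det_eq_zero_of_row_eq_zero v₀
    intro j
    simp [Matrix.updateRow_self]
  rw [h0] at hdet
  have : (if v₀ ∈ C then (1 : Polynomial ℤ) else 0) = 1 := by simp [hv₀]
  rw [this, one_smul] at hdet
  exact hdet.symm

/-! ### Expanding the determinant of `X•1 + L` -/

open scoped Classical in
/-- Allowed choices for the row of a vertex: a root marker, or an edge to a neighbour. -/
noncomputable def nbrs (G : SimpleGraph V) (v : V) : Finset (Option V) :=
  insert none ((G.neighborFinset v).image some)

/-- The summand of the row of `v` corresponding to choice `o`. -/
noncomputable def rowPiece (v : V) (o : Option V) : V → Polynomial ℤ :=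
  match o with
  | none => fun w => if w = v then Polynomial.X else 0
  | some u => fun w => (if w = v then 1 else 0) - (if w = u then 1 else 0)

lemma rowPiece_eq (r : V → Option V) (v : V) :
    rowPiece v (r v)
      = fun w => (if r v = none then (Polynomial.X : Polynomial ℤ) else 1) * pmatrix r v w := by
  funext w
  cases hv : r v with
  | none => simp [rowPiece, pmatrix, hv]
  | some u =>
    simp only [rowPiece, pmatrix, Matrix.of_apply, hv,
      if_neg (by simp : ¬ (some u = none)), one_mul]
    congr 1
    by_cases hw : w = u
    · subst hw; simp
    · have h2 : ¬ (some u = some w) := fun hc => hw (Option.some_injective _ hc).symm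
      simp [hw, h2]

open scoped Classical in
lemma row_decomp (G : SimpleGraph V) (v : V) :
    (fun w => ((Polynomial.X : Polynomial ℤ) • (1 : Matrix V V (Polynomial ℤ)) + (lap G).map Polynomial.C) v w)
      = ∑ o ∈ nbrs G v, rowPiece v o := by
  funext w
  have hnone : (none : Option V) ∉ (G.neighborFinset v).image some := by simp
  rw [nbrs, Finset.sum_apply, Finset.sum_insert hnone,
    Finset.sum_image (by intro x _ y _ h; exact Option.some_injective _ h)]
  by_cases hw : w = v
  · subst hw
    have hvv : ¬ G.Adj w w := G.irrefl
    have hsum : (∑ u ∈ G.neighborFinset w, rowPiece w (some u) w)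
        = (G.degree w : Polynomial ℤ) := by
      have hc : ∀ u ∈ G.neighborFinset w, rowPiece w (some u) w = (1 : Polynomial ℤ) := by
        intro u hu
        have hne : w ≠ u := fun h => hvv (h ▸ (G.mem_neighborFinset w u).mp hu)
        simp [rowPiece, hne]
      rw [Finset.sum_congr rfl hc, Finset.sum_const, SimpleGraph.card_neighborFinset_eq_degree]
      simp
    rw [hsum]
    simp only [Matrix.add_apply, Matrix.smul_apply, Matrix.map_apply, Matrix.one_apply,
      if_pos rfl, smul_eq_mul, mul_one, rowPiece]
    rw [lap]
    simp only [SimpleGraph.lapMatrix, SimpleGraph.degMatrix, Matrix.sub_apply,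
      Matrix.diagonal_apply, SimpleGraph.adjMatrix_apply, if_pos rfl, if_neg hvv, sub_zero]
    simp [Polynomial.C_eq_natCast]
  · have hsum : (∑ u ∈ G.neighborFinset v, rowPiece v (some u) w)
        = - (if G.Adj v w then (1 : Polynomial ℤ) else 0) := by
      by_cases hadj : G.Adj v w
      · have hmem : w ∈ G.neighborFinset v := (G.mem_neighborFinset v w).mpr hadj
        rw [Finset.sum_eq_single_of_mem w hmem]
        · simp [rowPiece, hw, hadj]
        · intro u hu hne
          have : w ≠ u := fun h => hne h.symm
          simp [rowPiece, hw, this]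
      · have hc : ∀ u ∈ G.neighborFinset v, rowPiece v (some u) w = 0 := by
          intro u hu
          have hne : w ≠ u := fun h => hadj (h ▸ (G.mem_neighborFinset v u).mp hu)
          simp [rowPiece, hw, hne]
        rw [Finset.sum_congr rfl hc]
        simp [hadj]
    rw [hsum]
    have hw' : ¬ (v = w) := fun h => hw h.symm
    simp only [Matrix.add_apply, Matrix.smul_apply, Matrix.map_apply, Matrix.one_apply,
      if_neg hw', smul_eq_mul, mul_zero, zero_add, rowPiece, if_neg hw]
    rw [lap]
    simp only [SimpleGraph.lapMatrix, SimpleGraph.degMatrix, Matrix.sub_apply,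
      Matrix.diagonal_apply, SimpleGraph.adjMatrix_apply, if_neg hw', zero_sub, zero_add]
    by_cases hadj : G.Adj v w <;> simp [hadj]

open scoped Classical in
lemma det_expand (G : SimpleGraph V) :
    ((Polynomial.X : Polynomial ℤ) • (1 : Matrix V V (Polynomial ℤ)) + (lap G).map Polynomial.C).det =
      ∑ r ∈ Fintype.piFinset (nbrs G),
        if HasCycle r then 0
        else Polynomial.X ^ (Finset.univ.filter fun v => r v = none).card := by
  have hM : ((Polynomial.X : Polynomial ℤ) • (1 : Matrix V V (Polynomial ℤ)) + (lap G).map Polynomial.C)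
      = Matrix.of (fun v => ∑ o ∈ nbrs G v, rowPiece v o) := by
    refine Matrix.ext fun v w => ?_
    exact congrFun (row_decomp G v) w
  rw [hM]
  have expand : (Matrix.of fun v => ∑ o ∈ nbrs G v, rowPiece v o).det
      = ∑ r ∈ Fintype.piFinset (nbrs G),
          Matrix.detRowAlternating (fun v => rowPiece v (r v)) :=
    (Matrix.detRowAlternating :
        (V → Polynomial ℤ) [⋀^V]→ₗ[Polynomial ℤ] (Polynomial ℤ)).toMultilinearMap.map_sum_finset
      (fun v o => rowPiece v o) (nbrs G)
  rw [expand]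
  apply Finset.sum_congr rfl
  intro r _
  have h1 : (fun v => rowPiece v (r v))
      = fun v w => (if r v = none then (Polynomial.X : Polynomial ℤ) else 1) * pmatrix r v w :=
    funext (rowPiece_eq r)
  have h2 : Matrix.detRowAlternating (fun v => rowPiece v (r v))
      = Matrix.det (Matrix.of fun v w =>
          (if r v = none then (Polynomial.X : Polynomial ℤ) else 1) * pmatrix r v w) := by
    rw [h1]; rfl
  rw [h2, Matrix.det_mul_column]
  have h3 : (∏ v : V, if r v = none then (Polynomial.X : Polynomial ℤ) else 1)
      = Polynomial.X ^ (Finset.univ.filter fun v => r v = none).card := by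
    rw [← Finset.prod_filter_mul_prod_filter_not Finset.univ (fun v => r v = none)]
    rw [Finset.prod_congr rfl (fun v hv => if_pos (Finset.mem_filter.mp hv).2),
      Finset.prod_congr rfl (fun v hv => if_neg (Finset.mem_filter.mp hv).2)]
    simp [Finset.prod_const]
  rw [h3]
  by_cases hcyc : HasCycle r
  · rw [pmatrix_det_of_hasCycle hcyc, if_pos hcyc, mul_zero]
  · rw [pmatrix_det_of_not_hasCycle hcyc, if_neg hcyc, mul_one]

open scoped Classical in
lemma coeff_det_expand (G : SimpleGraph V) (k : ℕ) :
    (((Polynomial.X : Polynomial ℤ) • (1 : Matrix V V (Polynomial ℤ)) + (lap G).map Polynomial.C).det).coeff k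
      = ((Fintype.piFinset (nbrs G)).filter fun r =>
          ¬ HasCycle r ∧ (Finset.univ.filter fun v => r v = none).card = k).card := by
  rw [det_expand, Polynomial.finset_sum_coeff]
  have term : ∀ r ∈ Fintype.piFinset (nbrs G),
      ((if HasCycle r then 0
        else Polynomial.X ^ (Finset.univ.filter fun v => r v = none).card : Polynomial ℤ)).coeff k
      = if (¬ HasCycle r ∧ (Finset.univ.filter fun v => r v = none).card = k) then 1 else 0 := by
    intro r _
    by_cases hcyc : HasCycle r
    · simp [hcyc]
    · rw [if_neg hcyc, Polynomial.coeff_X_pow]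
      by_cases hk : (Finset.univ.filter fun v => r v = none).card = k
      · simp [hk, hcyc]
      · have : ¬ (k = (Finset.univ.filter fun v => r v = none).card) := fun h => hk h.symm
        simp [hk, hcyc, this]
  rw [Finset.sum_congr rfl term, Finset.sum_boole]

/-! ### Relating to the characteristic polynomial -/

lemma coeff_eval₂_neg_X (p : Polynomial ℤ) (k : ℕ) :
    (Polynomial.eval₂ Polynomial.C (-Polynomial.X) p).coeff k = (-1)^k * p.coeff k := by
  induction p using Polynomial.induction_on' with
  | add p q hp hq => simp [hp, hq, mul_add]
  | monomial n a =>
    rw [Polynomial.eval₂_monomial, Polynomial.coeff_monomial, neg_pow]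
    rw [show Polynomial.C a * ((-1)^n * Polynomial.X^n)
        = ((-1:Polynomial ℤ)^n) * (Polynomial.C a * Polynomial.X^n) by ring]
    rw [show ((-1:Polynomial ℤ)^n) = Polynomial.C ((-1:ℤ)^n) by simp]
    rw [Polynomial.coeff_C_mul, Polynomial.coeff_C_mul, Polynomial.coeff_X_pow]
    by_cases hk : n = k
    · subst hk; simp
    · have : ¬ (k = n) := fun h => hk h.symm
      simp [hk, this]

open scoped Classical in
lemma charpoly_coeff_natAbs_eq (G : SimpleGraph V) (k : ℕ) :
    ((lap G).charpoly.coeff k).natAbs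
      = ((((Polynomial.X : Polynomial ℤ) • (1 : Matrix V V (Polynomial ℤ))
          + (lap G).map Polynomial.C).det).coeff k).natAbs := by
  set M : Matrix V V (Polynomial ℤ) :=
    (Polynomial.X : Polynomial ℤ) • (1 : Matrix V V (Polynomial ℤ))
      + (lap G).map Polynomial.C with hMdef
  set φ : Polynomial ℤ →+* Polynomial ℤ :=
    Polynomial.eval₂RingHom Polynomial.C (-Polynomial.X) with hφdef
  have hphiC : ∀ a : ℤ, φ (Polynomial.C a) = Polynomial.C a := fun a => Polynomial.eval₂_C _ _
  have hphiX : φ Polynomial.X = -Polynomial.X := Polynomial.eval₂_X _ _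
  have hmap : M.map φ = - Matrix.charmatrix (lap G) := by
    refine Matrix.ext fun i j => ?_
    by_cases hij : i = j
    · subst hij
      have e1 : M i i = Polynomial.X + Polynomial.C (lap G i i) := by
        simp [hMdef, Matrix.add_apply, Matrix.smul_apply, Matrix.one_apply, Matrix.map_apply]
      have e2 : Matrix.charmatrix (lap G) i i = Polynomial.X - Polynomial.C (lap G i i) :=
        Matrix.charmatrix_apply_eq _ _
      rw [Matrix.map_apply, e1, Matrix.neg_apply, e2, map_add, hphiC, hphiX]
      ring
    · have e1 : M i j = Polynomial.C (lap G i j) := by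
        simp [hMdef, Matrix.add_apply, Matrix.smul_apply, Matrix.one_apply, Matrix.map_apply,
          hij]
      have e2 : Matrix.charmatrix (lap G) i j = - Polynomial.C (lap G i j) :=
        Matrix.charmatrix_apply_ne _ _ _ hij
      rw [Matrix.map_apply, e1, Matrix.neg_apply, e2, hphiC]
      ring
  have hdet : φ M.det = (-1)^(Fintype.card V) * (lap G).charpoly := by
    rw [RingHom.map_det, RingHom.mapMatrix_apply, hmap, Matrix.det_neg, Matrix.charpoly]
  have heq : ∀ k, (-1:ℤ)^k * (M.det.coeff k)
      = ((-1:Polynomial ℤ)^(Fintype.card V) * (lap G).charpoly).coeff k := by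
    intro k
    rw [← hdet]
    have : (φ M.det).coeff k = (-1:ℤ)^k * (M.det.coeff k) := by
      rw [hφdef]
      exact coeff_eval₂_neg_X M.det k
    rw [this]
  have h2 := heq k
  rw [show ((-1:Polynomial ℤ)^(Fintype.card V)) = Polynomial.C ((-1:ℤ)^(Fintype.card V)) by simp,
    Polynomial.coeff_C_mul] at h2
  have := congrArg Int.natAbs h2
  simp only [Int.natAbs_mul, Int.natAbs_pow] at this
  simp only [Int.natAbs_neg, Int.natAbs_one, one_pow, one_mul] at this
  exact this.symm

/-! ### The bijection with rooted spanning forests -/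

open scoped Classical in
lemma mem_piFinset_nbrs (G : SimpleGraph V) (r : V → Option V) :
    r ∈ Fintype.piFinset (nbrs G) ↔ ∀ v w, r v = some w → G.Adj v w := by
  rw [Fintype.mem_piFinset]
  constructor
  · intro h v w hvw
    have hv := h v
    rw [nbrs, Finset.mem_insert, hvw] at hv
    rcases hv with h1 | h1
    · exact absurd h1 (by simp)
    · rw [Finset.mem_image] at h1
      obtain ⟨u, hu, hu2⟩ := h1
      rw [G.mem_neighborFinset v u] at hu
      rwa [Option.some_injective _ hu2] at hu
  · intro h v
    rw [nbrs, Finset.mem_insert]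
    cases hv : r v with
    | none => exact Or.inl rfl
    | some w =>
      right
      rw [Finset.mem_image]
      exact ⟨w, (G.mem_neighborFinset v w).mpr (h v w hv), rfl⟩

open scoped Classical in
lemma card_components (h : ¬ HasCycle r) :
    Nat.card (forest r).ConnectedComponent
      = (Finset.univ.filter fun v => r v = none).card := by
  rw [← Nat.card_congr (rootEquiv h), Nat.card_eq_fintype_card, Fintype.card_subtype]

open scoped Classical in
/-- The forward map from acyclic parent maps to rooted spanning forests. -/
noncomputable def toForest (G : SimpleGraph V) (k : ℕ) (r : V → Option V)
    (hr : r ∈ (Fintype.piFinset (nbrs G)).filter fun r =>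
      ¬ HasCycle r ∧ (Finset.univ.filter fun v => r v = none).card = k) :
    RootedSpanningKForest G k :=
  ⟨(forest r, {v | r v = none}), by
    obtain ⟨hmem, hnc, hcount⟩ := Finset.mem_filter.mp hr
    have hgood : ∀ v w, r v = some w → G.Adj v w := (mem_piFinset_nbrs G r).mp hmem
    refine ⟨?_, forest_isAcyclic hnc, ?_, ?_⟩
    · intro v w hadj
      rcases (forest_adj r v w).mp hadj with ⟨_, h | h⟩
      · exact hgood _ _ h
      · exact (hgood _ _ h).symm
    · rw [card_components hnc]; exact hcount
    · intro c
      exact unique_root hnc c⟩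

/-- In an acyclic graph, two paths between the same vertices have the same second vertex. -/
lemma getVert_one_unique {F : SimpleGraph V} (hac : F.IsAcyclic) {v x : V}
    (p q : F.Walk v x) (hp : p.IsPath) (hq : q.IsPath) : p.getVert 1 = q.getVert 1 := by
  have h := hac.path_unique ⟨p, hp⟩ ⟨q, hq⟩
  have hw : p = q := congrArg Subtype.val h
  rw [hw]

open scoped Classical in
lemma toForest_injective (G : SimpleGraph V) (k : ℕ) (r₁ r₂ : V → Option V)
    (h₁ : r₁ ∈ (Fintype.piFinset (nbrs G)).filter fun r =>
      ¬ HasCycle r ∧ (Finset.univ.filter fun v => r v = none).card = k)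
    (h₂ : r₂ ∈ (Fintype.piFinset (nbrs G)).filter fun r =>
      ¬ HasCycle r ∧ (Finset.univ.filter fun v => r v = none).card = k)
    (heq : toForest G k r₁ h₁ = toForest G k r₂ h₂) : r₁ = r₂ := by
  have hnc₁ : ¬ HasCycle r₁ := (Finset.mem_filter.mp h₁).2.1
  have hnc₂ : ¬ HasCycle r₂ := (Finset.mem_filter.mp h₂).2.1
  have hpair : ((forest r₁, {v | r₁ v = none}) : SimpleGraph V × Set V)
      = (forest r₂, {v | r₂ v = none}) := congrArg Subtype.val heq
  have hF : forest r₁ = forest r₂ := congrArg Prod.fst hpair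
  have hR : ({v | r₁ v = none} : Set V) = {v | r₂ v = none} := congrArg Prod.snd hpair
  have hRiff : ∀ v, r₁ v = none ↔ r₂ v = none := by
    intro v
    constructor
    · intro h
      have hm : v ∈ ({v | r₁ v = none} : Set V) := h
      rw [hR] at hm
      exact hm
    · intro h
      have hm : v ∈ ({v | r₂ v = none} : Set V) := h
      rw [← hR] at hm
      exact hm
  funext v
  cases hv1 : r₁ v with
  | none => exact ((hRiff v).mp hv1).symm
  | some w₁ =>
    cases hv2 : r₂ v with
    | none =>
      exfalso
      have hc := (hRiff v).mpr hv2
      rw [hv1] at hc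
      cases hc
    | some w₂ =>
      congr 1
      have hroots : root hnc₁ v = root hnc₂ v := by
        obtain ⟨u, _, huniq⟩ := unique_root hnc₁ ((forest r₁).connectedComponentMk v)
        have e1 : root hnc₁ v = u := huniq _ ⟨r_root hnc₁ v,
          SimpleGraph.ConnectedComponent.sound (reachable_root hnc₁ v).symm⟩
        have e2 : root hnc₂ v = u := by
          refine huniq _ ⟨(hRiff _).mpr (r_root hnc₂ v), ?_⟩
          rw [hF]
          exact SimpleGraph.ConnectedComponent.sound (reachable_root hnc₂ v).symm
        rw [e1, e2]
      obtain ⟨p₁, hp₁, -, hg₁⟩ := exists_good_path hnc₁ v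
      obtain ⟨p₂, hp₂, -, hg₂⟩ := exists_good_path hnc₂ v
      have hw₁ : p₁.getVert 1 = w₁ := hg₁ w₁ hv1
      have hw₂ : p₂.getVert 1 = w₂ := hg₂ w₂ hv2
      clear hg₁ hg₂
      revert hw₁ hp₁
      revert p₁
      rw [hF, hroots]
      intro p₁ hp₁ hw₁
      rw [← hw₁, ← hw₂]
      exact getVert_one_unique (forest_isAcyclic hnc₂) p₁ p₂ hp₁ hp₂

open scoped Classical in
lemma toForest_surjective (G : SimpleGraph V) (k : ℕ) (x : RootedSpanningKForest G k) :
    ∃ r hr, toForest G k r hr = x := by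
  set F : SimpleGraph V := x.1.1 with hFdef
  set R : Set V := x.1.2 with hRdef
  have hle : F ≤ G := x.2.1
  have hac : F.IsAcyclic := x.2.2.1
  have hcard : Nat.card F.ConnectedComponent = k := x.2.2.2.1
  have hroot : ∀ c : F.ConnectedComponent, ∃! v, v ∈ R ∧ F.connectedComponentMk v = c :=
    x.2.2.2.2
  choose rho hrho using hroot
  have hreach : ∀ v : V, F.Reachable v (rho (F.connectedComponentMk v)) := fun v =>
    (SimpleGraph.ConnectedComponent.exact ((hrho (F.connectedComponentMk v)).1.2)).symm
  have hpath : ∀ v : V, ∃ p : F.Walk v (rho (F.connectedComponentMk v)), p.IsPath := by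
    intro v
    obtain ⟨q⟩ := hreach v
    exact ⟨q.toPath.1, q.toPath.2⟩
  choose pa hpa using hpath
  set r : V → Option V := fun v =>
    if v = rho (F.connectedComponentMk v) then none else some ((pa v).getVert 1) with hrdef
  have hrnone : ∀ v, r v = none ↔ v ∈ R := by
    intro v
    constructor
    · intro h
      by_cases hv : v = rho (F.connectedComponentMk v)
      · rw [hv]; exact (hrho _).1.1
      · simp only [hrdef, if_neg hv] at h
        cases h
    · intro hvR
      have hv : v = rho (F.connectedComponentMk v) := (hrho _).2 v ⟨hvR, rfl⟩
      simp only [hrdef, if_pos hv]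
  have hne_rho : ∀ v, v ≠ rho (F.connectedComponentMk v) → ¬ (pa v).Nil := fun v hv =>
    SimpleGraph.Walk.not_nil_of_ne hv
  have hFadj : ∀ v w, r v = some w → F.Adj v w := by
    intro v w hvw
    by_cases hv : v = rho (F.connectedComponentMk v)
    · simp only [hrdef, if_pos hv] at hvw
      cases hvw
    · simp only [hrdef, if_neg hv] at hvw
      have hthis : F.Adj v ((pa v).getVert 1) := SimpleGraph.Walk.adj_snd (hne_rho v hv)
      rwa [Option.some_injective _ hvw] at hthis
  have hmkeq : ∀ v w, F.Adj v w →
      F.connectedComponentMk v = F.connectedComponentMk w := fun v w h =>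
    SimpleGraph.ConnectedComponent.connectedComponentMk_eq_of_adj h
  have hD : ∀ v w, r v = some w → (pa w).length + 1 = (pa v).length := by
    intro v w hvw
    have hv : v ≠ rho (F.connectedComponentMk v) := by
      intro hv
      simp only [hrdef, if_pos hv] at hvw
      cases hvw
    have hg1 : (pa v).getVert 1 = w := by
      simp only [hrdef, if_neg hv] at hvw
      exact Option.some_injective _ hvw
    have hadj := hFadj v w hvw
    have hrr : rho (F.connectedComponentMk v) = rho (F.connectedComponentMk w) := by
      rw [hmkeq v w hadj]
    have hnil := hne_rho v hv
    have htail : ((pa v).tail.copy hg1 hrr).IsPath := by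
      rw [SimpleGraph.Walk.isPath_copy]
      exact (hpa v).tail
    have hthis := hac.path_unique ⟨pa w, hpa w⟩ ⟨(pa v).tail.copy hg1 hrr, htail⟩
    have hww : pa w = (pa v).tail.copy hg1 hrr := congrArg Subtype.val hthis
    have hlen : (pa w).length = (pa v).tail.length := by
      rw [hww, SimpleGraph.Walk.length_copy]
    have hlt := SimpleGraph.Walk.length_tail_add_one hnil
    omega
  have hnc : ¬ HasCycle r := by
    rintro ⟨v, m, hm, hiter⟩
    have key : ∀ m v u, iter r m v = some u → (pa u).length + m ≤ (pa v).length := by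
      intro m
      induction m with
      | zero =>
        intro v u h
        simp only [iter_zero] at h
        rw [Option.some_injective _ h]
        omega
      | succ m ih =>
        intro v u h
        rw [iter_succ] at h
        cases hv : r v with
        | none => rw [hv] at h; simp at h
        | some w =>
          rw [hv] at h
          simp only [Option.bind_some] at h
          have k1 := ih w u h
          have k2 := hD v w hv
          omega
    have := key m v v hiter
    omega
  have hGadj : r ∈ Fintype.piFinset (nbrs G) :=
    (mem_piFinset_nbrs G r).mpr fun v w h => hle (hFadj v w h)
  have equivRC : {v : V // v ∈ R} ≃ F.ConnectedComponent :=
    { toFun := fun v => F.connectedComponentMk v.1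
      invFun := fun c => ⟨rho c, (hrho c).1.1⟩
      left_inv := by
        rintro ⟨v, hv⟩
        exact Subtype.ext ((hrho _).2 v ⟨hv, rfl⟩).symm
      right_inv := fun c => (hrho c).1.2 }
  have hcount : (Finset.univ.filter fun v => r v = none).card = k := by
    have e1 : (Finset.univ.filter fun v => r v = none)
        = (Finset.univ.filter fun v => v ∈ R) :=
      Finset.filter_congr fun v _ => by rw [hrnone v]
    rw [e1, ← Fintype.card_subtype, ← Nat.card_eq_fintype_card, Nat.card_congr equivRC]
    exact hcard
  refine ⟨r, Finset.mem_filter.mpr ⟨hGadj, hnc, hcount⟩, ?_⟩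
  apply Subtype.ext
  show (forest r, {v | r v = none}) = x.1
  rw [show x.1 = (F, R) from rfl]
  have hReq : ({v | r v = none} : Set V) = R := Set.ext fun v => hrnone v
  have hFeq : forest r = F := by
    ext v w
    rw [forest_adj]
    constructor
    · rintro ⟨hne, h | h⟩
      · exact hFadj _ _ h
      · exact (hFadj _ _ h).symm
    · intro hadj
      refine ⟨hadj.ne, ?_⟩
      by_cases hvρ : v = rho (F.connectedComponentMk v)
      · right
        have hwρ : w ≠ rho (F.connectedComponentMk w) := by
          rw [← hmkeq v w hadj, ← hvρ]
          exact hadj.ne'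
        have hend : v = rho (F.connectedComponentMk w) := by
          rw [← hmkeq v w hadj]
          exact hvρ
        have hse : ((SimpleGraph.Walk.cons hadj.symm SimpleGraph.Walk.nil).copy rfl hend).IsPath := by
          rw [SimpleGraph.Walk.isPath_copy]
          simp [hadj.ne']
        have hthis := hac.path_unique ⟨pa w, hpa w⟩ ⟨_, hse⟩
        have hww : pa w
            = (SimpleGraph.Walk.cons hadj.symm SimpleGraph.Walk.nil).copy rfl hend :=
          congrArg Subtype.val hthis
        simp only [hrdef, if_neg hwρ]
        rw [hww]
        simp [SimpleGraph.Walk.getVert_copy]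
      · by_cases hw : w ∈ (pa v).support
        · left
          have htu : ((pa v).takeUntil w hw).IsPath := (hpa v).takeUntil hw
          have hse : (SimpleGraph.Walk.cons hadj SimpleGraph.Walk.nil).IsPath := by
            simp [hadj.ne]
          have hthis := hac.path_unique ⟨(pa v).takeUntil w hw, htu⟩ ⟨_, hse⟩
          have htu2 : (pa v).takeUntil w hw
              = SimpleGraph.Walk.cons hadj SimpleGraph.Walk.nil :=
            congrArg Subtype.val hthis
          have hspec := (pa v).take_spec hw
          simp only [hrdef, if_neg hvρ]
          have hg : (pa v).getVert 1 = w := by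
            conv_lhs => rw [← hspec, htu2]
            rw [SimpleGraph.Walk.getVert_append]
            simp
          rw [hg]
        · right
          have hwρ : w ≠ rho (F.connectedComponentMk w) := by
            intro hcon
            apply hw
            have hthis : rho (F.connectedComponentMk w)
                = rho (F.connectedComponentMk v) := by
              rw [hmkeq v w hadj]
            rw [hcon, hthis]
            exact SimpleGraph.Walk.end_mem_support (pa v)
          have hrr : rho (F.connectedComponentMk v) = rho (F.connectedComponentMk w) := by
            rw [hmkeq v w hadj]
          have hcons : ((SimpleGraph.Walk.cons hadj.symm (pa v)).copy rfl hrr).IsPath := by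
            rw [SimpleGraph.Walk.isPath_copy]
            exact (hpa v).cons hw
          have hthis := hac.path_unique ⟨pa w, hpa w⟩ ⟨_, hcons⟩
          have hww : pa w = (SimpleGraph.Walk.cons hadj.symm (pa v)).copy rfl hrr :=
            congrArg Subtype.val hthis
          simp only [hrdef, if_neg hwρ]
          rw [hww]
          simp [SimpleGraph.Walk.getVert_copy, SimpleGraph.Walk.getVert_cons_succ]
  rw [Prod.mk.injEq]
  exact ⟨hFeq, hReq⟩

open scoped Classical in
lemma card_forests (G : SimpleGraph V) (k : ℕ) :
    Nat.card (RootedSpanningKForest G k)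
      = ((Fintype.piFinset (nbrs G)).filter fun r =>
          ¬ HasCycle r ∧ (Finset.univ.filter fun v => r v = none).card = k).card := by
  have hbij : Function.Bijective
      (fun r : {r // r ∈ (Fintype.piFinset (nbrs G)).filter fun r =>
          ¬ HasCycle r ∧ (Finset.univ.filter fun v => r v = none).card = k} =>
        toForest G k r.1 r.2) := by
    constructor
    · rintro ⟨ra, hra⟩ ⟨rb, hrb⟩ h
      exact Subtype.ext (toForest_injective G k ra rb hra hrb h)
    · intro x
      obtain ⟨ra, hra, heq⟩ := toForest_surjective G k x
      exact ⟨⟨ra, hra⟩, heq⟩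
  rw [← Nat.card_congr (Equiv.ofBijective _ hbij), Nat.card_eq_fintype_card, Fintype.card_coe]

end ForestProof

theorem abs_charpoly_coeff_eq_card_rooted_k_forests
    {V : Type*} [Fintype V] [DecidableEq V] (G : SimpleGraph V) (k : ℕ) :
    ((lap G).charpoly.coeff k).natAbs = Nat.card (RootedSpanningKForest G k) := by
  classical
  rw [ForestProof.charpoly_coeff_natAbs_eq G k, ForestProof.coeff_det_expand G k,
    ForestProof.card_forests G k]
  exact Int.natAbs_natCast _
end

section
/- The number of spanning trees in the cone over a finite graph G equals |χ_G(−1)|, where χ_G is the characteristic polynomial of the Laplacian matrix of G. -/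
open SimpleGraph

/-- The cone over a graph `G`: the join of `G` with a single new vertex (`none`),
joined by an edge to every vertex of `G`. -/
def cone {V : Type*} (G : SimpleGraph V) : SimpleGraph (Option V) :=
  SimpleGraph.fromRel (fun x y => x = none ∨ ∃ a b, x = some a ∧ y = some b ∧ G.Adj a b)

/-- The number of spanning trees of `G`. -/
noncomputable def numSpanningTrees {V : Type*} (G : SimpleGraph V) : ℕ :=
  Nat.card {H : SimpleGraph V // H ≤ G ∧ H.IsTree}

namespace ConeMTT

open Finset

variable {V : Type*} [Fintype V] [DecidableEq V]

/-- One step of a parent map, on `Option V`; `none` is absorbing. -/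
def stp (g : V → Option V) : Option V → Option V := fun o => o.bind g

/-- `g` is a valid parent map for `G`: parents are neighbors. -/
def Valid (G : SimpleGraph V) (g : V → Option V) : Prop :=
  ∀ v u, g v = some u → G.Adj v u

/-- `v` is a periodic point of `g`. -/
def Per (g : V → Option V) (v : V) : Prop :=
  ∃ k, k ≠ 0 ∧ (stp g)^[k] (some v) = some v

/-- `g` has no periodic points. -/
def Acyc (g : V → Option V) : Prop := ∀ v, ¬ Per g v

open Classical in
/-- The finset of valid acyclic parent maps. -/
noncomputable def treeFuns (G : SimpleGraph V) : Finset (V → Option V) :=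
  Finset.univ.filter (fun g => Valid G g ∧ Acyc g)


lemma stp_none (g : V → Option V) : stp g none = none := rfl

lemma iter_none (g : V → Option V) (k : ℕ) : (stp g)^[k] none = none := by
  induction k with
  | zero => rfl
  | succ k ih => rw [Function.iterate_succ_apply, stp_none, ih]

lemma iter_add (g : V → Option V) (m n : ℕ) (x : Option V) :
    (stp g)^[m + n] x = (stp g)^[n] ((stp g)^[m] x) := by
  rw [Nat.add_comm, Function.iterate_add_apply]

section PartA

variable (G : SimpleGraph V) [DecidableRel G.Adj]

/-- possible parents of `v` : `none` or a neighbor. -/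
def opts (v : V) : Finset (Option V) :=
  insert none ((G.neighborFinset v).image some)

lemma mem_opts {v : V} {o : Option V} :
    o ∈ opts G v ↔ o = none ∨ ∃ u, o = some u ∧ G.Adj v u := by
  simp only [opts, mem_insert, mem_image, mem_neighborFinset]
  constructor
  · rintro (h | ⟨u, hu, rfl⟩)
    · exact Or.inl h
    · exact Or.inr ⟨u, rfl, hu⟩
  · rintro (h | ⟨u, rfl, h⟩)
    · exact Or.inl h
    · exact Or.inr ⟨u, h, rfl⟩

lemma card_opts (v : V) : (opts G v).card = 1 + G.degree v := by
  rw [opts, card_insert_of_notMem (by simp), card_image_of_injective _ (Option.some_injective V)]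
  rw [Nat.add_comm]
  rfl

/-- compatibility of a permutation with a parent map. -/
def Compat (g : V → Option V) (σ : Equiv.Perm V) : Prop :=
  ∀ v, σ v ≠ v → g v = some (σ v)


open Classical in
/-- The finset of permutations compatible with `g`. -/
noncomputable def compatFinset (g : V → Option V) : Finset (Equiv.Perm V) :=
  Finset.univ.filter (fun σ => Compat g σ)

open Classical in
lemma mem_compatFinset {g : V → Option V} {σ : Equiv.Perm V} :
    σ ∈ compatFinset g ↔ Compat g σ := by simp [compatFinset]

/-- the sign weight appearing in the determinant expansion. -/
noncomputable def eps (σ : Equiv.Perm V) : ℤ :=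
  (Equiv.Perm.sign σ : ℤ) * (-1) ^ σ.support.card

lemma eps_ne_zero (σ : Equiv.Perm V) : eps σ ≠ 0 :=
  mul_ne_zero (Units.ne_zero _) (pow_ne_zero _ (by norm_num))

lemma compat_iter {g : V → Option V} {σ : Equiv.Perm V} (h : Compat g σ) {v : V}
    (hv : σ v ≠ v) (k : ℕ) :
    (stp g)^[k] (some v) = some ((σ ^ k) v) ∧ σ ((σ ^ k) v) ≠ (σ ^ k) v := by
  induction k with
  | zero => simpa using hv
  | succ k ih =>
    obtain ⟨h1, h2⟩ := ih
    have hgv : g ((σ ^ k) v) = some (σ ((σ ^ k) v)) := h _ h2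
    have hps : (σ ^ (k + 1)) v = σ ((σ ^ k) v) := by
      rw [pow_succ', Equiv.Perm.mul_apply]
    constructor
    · rw [Function.iterate_succ_apply', h1, hps]
      simpa [stp] using hgv
    · rw [hps]
      exact fun hc => h2 (σ.injective hc)

lemma compat_one (g : V → Option V) : Compat g 1 := fun v hv => absurd rfl hv

lemma sum_compat_of_acyc {g : V → Option V} (hg : Acyc g) :
    ∑ σ ∈ compatFinset g, eps σ = 1 := by
  classical
  have hfilter : compatFinset g = {1} := by
    apply Finset.eq_singleton_iff_unique_mem.mpr
    refine ⟨mem_compatFinset.mpr (compat_one g), ?_⟩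
    intro σ hσ
    rw [mem_compatFinset] at hσ
    by_contra hne
    obtain ⟨v, hv⟩ : ∃ v, σ v ≠ v := by
      by_contra hall
      push_neg at hall
      exact hne (Equiv.ext hall)
    have hk := compat_iter hσ hv (orderOf σ)
    rw [pow_orderOf_eq_one] at hk
    exact hg v ⟨orderOf σ, (orderOf_pos σ).ne', by simpa using hk.1⟩
  rw [hfilter]
  simp [eps]

lemma eps_mul_disjoint {σ τ : Equiv.Perm V} (h : σ.Disjoint τ) :
    eps (σ * τ) = eps σ * eps τ := by
  unfold eps
  rw [Equiv.Perm.sign_mul, h.card_support_mul, pow_add]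
  push_cast
  ring

lemma sum_compat_of_not_acyc {G : SimpleGraph V} {g : V → Option V} (hval : Valid G g)
    (hg : ¬ Acyc g) : ∑ σ ∈ compatFinset g, eps σ = 0 := by
  classical
  simp only [Acyc, not_forall, not_not] at hg
  obtain ⟨v₀, hv₀⟩ := hg
  -- the minimal period
  set p := Nat.find hv₀ with hp_def
  obtain ⟨hp0, hpiter⟩ : p ≠ 0 ∧ (stp g)^[p] (some v₀) = some v₀ := Nat.find_spec hv₀
  have hmin : ∀ q, q ≠ 0 → q < p → (stp g)^[q] (some v₀) ≠ some v₀ := by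
    intro q h1 h2 hq
    exact Nat.find_min hv₀ h2 ⟨h1, hq⟩
  -- iterates starting from v₀ never reach none
  have iter_ne_none : ∀ k, k ≤ p → (stp g)^[k] (some v₀) ≠ none := by
    intro k hk hnone
    have : (stp g)^[p] (some v₀) = none := by
      have := iter_add g k (p - k) (some v₀)
      rw [Nat.add_sub_cancel' hk] at this
      rw [this, hnone, iter_none]
    rw [hpiter] at this
    exact Option.some_ne_none _ this
  set vtx : ℕ → V := fun k => ((stp g)^[k] (some v₀)).getD v₀ with hvtx_def
  have some_vtx : ∀ k, k ≤ p → (stp g)^[k] (some v₀) = some (vtx k) := by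
    intro k hk
    rcases Option.eq_none_or_eq_some ((stp g)^[k] (some v₀)) with h | ⟨x, h⟩
    · exact absurd h (iter_ne_none k hk)
    · rw [h]; simp [hvtx_def, h]
  have vtx0 : vtx 0 = v₀ := rfl
  have vtxp : vtx p = v₀ := by
    have := some_vtx p le_rfl
    rw [hpiter] at this
    exact (Option.some_injective _ this.symm)
  have vtx_succ : ∀ k, k < p → g (vtx k) = some (vtx (k + 1)) := by
    intro k hk
    have h1 := some_vtx k hk.le
    have h2 := some_vtx (k + 1) hk
    rw [Function.iterate_succ_apply', h1] at h2
    simpa [stp] using h2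
  -- distinctness of iterates
  have iter_inj : ∀ a b, 0 < a → a < b → b ≤ p →
      (stp g)^[a] (some v₀) ≠ (stp g)^[b] (some v₀) := by
    intro a b ha0 hab hbp heq
    have key : (stp g)^[a + (p - b)] (some v₀) = some v₀ := by
      have h1 := iter_add g a (p - b) (some v₀)
      have h2 := iter_add g b (p - b) (some v₀)
      rw [Nat.add_sub_cancel' hbp, hpiter] at h2
      rw [h1, heq, ← h2]
    have hne : a + (p - b) ≠ 0 := by omega
    have hlt : a + (p - b) < p := by omega
    exact hmin _ hne hlt key
  have iter_inj' : ∀ a b, a < b → b < p →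
      (stp g)^[a] (some v₀) ≠ (stp g)^[b] (some v₀) := by
    intro a b hab hbp heq
    rcases Nat.eq_zero_or_pos a with rfl | ha0
    · exact hmin b (by omega) hbp (by simpa using heq.symm)
    · exact iter_inj a b ha0 hab hbp.le heq
  have vtx_inj : ∀ a b, a < p → b < p → vtx a = vtx b → a = b := by
    intro a b ha hb heq
    by_contra hne
    rcases Nat.lt_or_ge a b with h | h
    · exact iter_inj' a b h hb (by rw [some_vtx a ha.le, some_vtx b hb.le, heq])
    · have : b < a := by omega
      exact iter_inj' b a (by omega) ha (by rw [some_vtx a ha.le, some_vtx b hb.le, heq])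
  set O : Finset V := (Finset.range p).image vtx with hO_def
  have mem_O : ∀ x, x ∈ O ↔ ∃ a, a < p ∧ vtx a = x := by
    intro x; simp [hO_def, Finset.mem_image, Finset.mem_range, and_comm]
  have v₀_mem_O : v₀ ∈ O := (mem_O v₀).mpr ⟨0, Nat.pos_of_ne_zero hp0, vtx0⟩
  have cardO : O.card = p := by
    rw [hO_def, Finset.card_image_of_injOn, Finset.card_range]
    intro a ha b hb heq
    exact vtx_inj a b (Finset.mem_range.mp ha) (Finset.mem_range.mp hb) heq
  have vtx_mem_O : ∀ a, a < p → vtx a ∈ O := fun a ha => (mem_O _).mpr ⟨a, ha, rfl⟩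
  have vtx_succ_mem : ∀ a, a < p → vtx (a + 1) ∈ O := by
    intro a ha
    rcases Nat.lt_or_ge (a + 1) p with h | h
    · exact vtx_mem_O _ h
    · have : a + 1 = p := by omega
      rw [this, vtxp]; exact v₀_mem_O
  -- the cycle permutation
  set f : V → V := fun x => if x ∈ O then (g x).getD x else x with hf_def
  have f_spec : ∀ a, a < p → f (vtx a) = vtx (a + 1) := by
    intro a ha
    simp [hf_def, vtx_mem_O a ha, vtx_succ a ha]
  have f_some : ∀ x, x ∈ O → g x = some (f x) := by
    intro x hx
    obtain ⟨a, ha, rfl⟩ := (mem_O x).mp hx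
    rw [f_spec a ha]; exact vtx_succ a ha
  have f_mem : ∀ x, x ∈ O → f x ∈ O := by
    intro x hx
    obtain ⟨a, ha, rfl⟩ := (mem_O x).mp hx
    rw [f_spec a ha]; exact vtx_succ_mem a ha
  have f_not_mem : ∀ x, x ∉ O → f x = x := by
    intro x hx; simp [hf_def, hx]
  have f_inj : Function.Injective f := by
    intro x y hxy
    by_cases hx : x ∈ O <;> by_cases hy : y ∈ O
    · obtain ⟨a, ha, rfl⟩ := (mem_O x).mp hx
      obtain ⟨b, hb, rfl⟩ := (mem_O y).mp hy
      rw [f_spec a ha, f_spec b hb] at hxy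
      -- iterates at a+1 and b+1 agree
      have hiter : (stp g)^[a + 1] (some v₀) = (stp g)^[b + 1] (some v₀) := by
        rw [some_vtx (a+1) ha, some_vtx (b+1) hb, hxy]
      have : a = b := by
        by_contra hne
        rcases Nat.lt_or_ge a b with h | h
        · exact iter_inj (a+1) (b+1) (by omega) (by omega) (by omega) hiter
        · have : b < a := by omega
          exact iter_inj (b+1) (a+1) (by omega) (by omega) (by omega) hiter.symm
      rw [this]
    · exact absurd (f_mem x hx) (by rw [hxy, f_not_mem y hy]; exact hy)
    · exact absurd (f_mem y hy) (by rw [← hxy, f_not_mem x hx]; exact hx)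
    · rw [f_not_mem x hx, f_not_mem y hy] at hxy; exact hxy
  set c : Equiv.Perm V := Equiv.ofBijective f (Finite.injective_iff_bijective.mp f_inj)
    with hc_def
  have c_apply : ∀ x, c x = f x := fun x => rfl
  have c_ne : ∀ x, x ∈ O → c x ≠ x := by
    intro x hx hcx
    rw [c_apply] at hcx
    have := f_some x hx
    rw [hcx] at this
    exact G.irrefl (hval x x this)
  have c_fix : ∀ x, x ∉ O → c x = x := fun x hx => by rw [c_apply, f_not_mem x hx]
  have c_mem : ∀ x, x ∈ O → c x ∈ O := fun x hx => by rw [c_apply]; exact f_mem x hx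
  have cinv_mem : ∀ x, x ∈ O → c⁻¹ x ∈ O := by
    intro x hx
    by_contra h
    have : c (c⁻¹ x) = c⁻¹ x := c_fix _ h
    rw [(show c (c⁻¹ x) = x from c.apply_symm_apply x)] at this
    exact h (this ▸ hx)
  have cinv_fix : ∀ x, x ∉ O → c⁻¹ x = x := by
    intro x hx
    by_cases h : c⁻¹ x ∈ O
    · exact absurd (by rw [← (show c (c⁻¹ x) = x from c.apply_symm_apply x)]; exact c_mem _ h) hx
    · have := c_fix _ h
      rw [(show c (c⁻¹ x) = x from c.apply_symm_apply x)] at this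
      exact this.symm
  have support_c : c.support = O := by
    ext x
    rw [Equiv.Perm.mem_support]
    constructor
    · intro h
      by_contra hx
      exact h (c_fix x hx)
    · exact c_ne x
  have c_pow : ∀ a, a ≤ p → (c ^ a) v₀ = vtx a := by
    intro a ha
    induction a with
    | zero => simp [vtx0]
    | succ a ih =>
      have hap : a < p := by omega
      rw [pow_succ', Equiv.Perm.mul_apply, ih hap.le, c_apply, f_spec a hap]
  have c_isCycle : c.IsCycle := by
    refine ⟨v₀, c_ne v₀ v₀_mem_O, ?_⟩
    intro y hy
    have hyO : y ∈ O := by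
      by_contra h
      exact hy (c_fix y h)
    obtain ⟨a, ha, rfl⟩ := (mem_O y).mp hyO
    exact ⟨(a : ℤ), by rw [zpow_natCast, c_pow a ha.le]⟩
  have sign_c : Equiv.Perm.sign c = -(-1) ^ p := by
    rw [c_isCycle.sign, support_c, cardO]
  have eps_c : eps c = -1 := by
    unfold eps
    rw [support_c, cardO, sign_c]
    push_cast
    rw [neg_mul, ← pow_add, ← two_mul, pow_mul]
    norm_num
  -- key interaction lemmas with compatible permutations
  have fix_of_fix_v₀ : ∀ σ : Equiv.Perm V, Compat g σ → σ v₀ = v₀ →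
      ∀ x ∈ O, σ x = x := by
    intro σ hσ hσv₀ x hx
    by_contra hmoved
    obtain ⟨a, ha, rfl⟩ := (mem_O x).mp hx
    have hcompat := compat_iter hσ hmoved (p - a)
    have : (stp g)^[a + (p - a)] (some v₀) = some ((σ ^ (p - a)) (vtx a)) := by
      rw [iter_add, some_vtx a ha.le, hcompat.1]
    rw [Nat.add_sub_cancel' ha.le, hpiter] at this
    have hv : (σ ^ (p - a)) (vtx a) = v₀ := (Option.some_injective _ this).symm
    have := hcompat.2
    rw [hv] at this
    exact this hσv₀
  have agree_of_move_v₀ : ∀ σ : Equiv.Perm V, Compat g σ → σ v₀ ≠ v₀ →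
      ∀ x ∈ O, σ x = c x := by
    intro σ hσ hσv₀ x hx
    obtain ⟨a, ha, rfl⟩ := (mem_O x).mp hx
    have h1 := compat_iter hσ hσv₀ a
    have h2 := compat_iter hσ hσv₀ (a + 1)
    have e1 : (σ ^ a) v₀ = vtx a :=
      Option.some_injective _ (by rw [← h1.1, some_vtx a ha.le])
    have e2 : (σ ^ (a + 1)) v₀ = vtx (a + 1) :=
      Option.some_injective _ (by rw [← h2.1, some_vtx (a + 1) ha])
    have : σ (vtx a) = vtx (a + 1) := by
      rw [← e1, ← e2, pow_succ', Equiv.Perm.mul_apply]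
    rw [this, c_apply, f_spec a ha]
  -- the involution
  set ι : Equiv.Perm V → Equiv.Perm V := fun σ => if σ v₀ = v₀ then σ * c else σ * c⁻¹
    with hι_def
  have key_fix : ∀ σ : Equiv.Perm V, Compat g σ → σ v₀ = v₀ →
      Compat g (σ * c) ∧ (σ * c) v₀ ≠ v₀ ∧ eps (σ * c) = -eps σ := by
    intro σ hσ hfix
    have hdisj : σ.Disjoint c := by
      intro x
      by_cases hx : x ∈ O
      · exact Or.inl (fix_of_fix_v₀ σ hσ hfix x hx)
      · exact Or.inr (c_fix x hx)
    have happly : ∀ x, x ∈ O → (σ * c) x = c x := by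
      intro x hx
      rw [Equiv.Perm.mul_apply, fix_of_fix_v₀ σ hσ hfix _ (c_mem x hx)]
    refine ⟨?_, ?_, ?_⟩
    · intro x hmoved
      by_cases hx : x ∈ O
      · rw [happly x hx]
        rw [c_apply]
        exact f_some x hx
      · rw [Equiv.Perm.mul_apply, c_fix x hx] at hmoved ⊢
        exact hσ x hmoved
    · rw [happly v₀ v₀_mem_O]
      exact c_ne v₀ v₀_mem_O
    · rw [eps_mul_disjoint hdisj, eps_c]; ring
  have key_move : ∀ σ : Equiv.Perm V, Compat g σ → σ v₀ ≠ v₀ →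
      Compat g (σ * c⁻¹) ∧ (σ * c⁻¹) v₀ = v₀ ∧ eps (σ * c⁻¹) = -eps σ := by
    intro σ hσ hmove
    have hfixO : ∀ x, x ∈ O → (σ * c⁻¹) x = x := by
      intro x hx
      rw [Equiv.Perm.mul_apply, agree_of_move_v₀ σ hσ hmove _ (cinv_mem x hx),
        (show c (c⁻¹ x) = x from c.apply_symm_apply x)]
    have hout : ∀ x, x ∉ O → (σ * c⁻¹) x = σ x := by
      intro x hx
      rw [Equiv.Perm.mul_apply, cinv_fix x hx]
    have hdisj : (σ * c⁻¹).Disjoint c := by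
      intro x
      by_cases hx : x ∈ O
      · exact Or.inl (hfixO x hx)
      · exact Or.inr (c_fix x hx)
    have hrecomp : σ = (σ * c⁻¹) * c := by group
    refine ⟨?_, hfixO v₀ v₀_mem_O, ?_⟩
    · intro x hmoved
      by_cases hx : x ∈ O
      · exact absurd (hfixO x hx) hmoved
      · rw [hout x hx] at hmoved ⊢
        exact hσ x hmoved
    · have h1 : eps ((σ * c⁻¹) * c) = eps (σ * c⁻¹) * eps c := eps_mul_disjoint hdisj
      rw [← hrecomp] at h1
      rw [h1, eps_c]
      ring
  -- apply the involution principle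
  refine Finset.sum_involution (fun σ _ => ι σ) ?_ ?_ ?_ ?_
  · intro σ hσ
    rw [mem_compatFinset] at hσ
    by_cases hv : σ v₀ = v₀
    · have := (key_fix σ hσ hv).2.2
      simp only [hι_def, if_pos hv, this]
      ring
    · have := (key_move σ hσ hv).2.2
      simp only [hι_def, if_neg hv, this]
      ring
  · intro σ hσ _
    rw [mem_compatFinset] at hσ
    by_cases hv : σ v₀ = v₀
    · simp only [hι_def, if_pos hv]
      intro hcontra
      exact (key_fix σ hσ hv).2.1 (by rw [hcontra, hv])
    · simp only [hι_def, if_neg hv]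
      intro hcontra
      exact hv (by rw [← hcontra]; exact (key_move σ hσ hv).2.1)
  · intro σ hσ
    rw [mem_compatFinset] at hσ
    rw [mem_compatFinset]
    by_cases hv : σ v₀ = v₀
    · simp only [hι_def, if_pos hv]
      exact (key_fix σ hσ hv).1
    · simp only [hι_def, if_neg hv]
      exact (key_move σ hσ hv).1
  · intro σ hσ
    rw [mem_compatFinset] at hσ
    by_cases hv : σ v₀ = v₀
    · have hne := (key_fix σ hσ hv).2.1
      simp only [hι_def, if_pos hv, if_neg hne]
      group
    · have heq := (key_move σ hσ hv).2.1
      simp only [hι_def, if_neg hv, if_pos heq]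
      group

open Classical in
theorem det_eq_card (G : SimpleGraph V) [DecidableRel G.Adj] :
    (1 + G.lapMatrix ℤ).det = ((treeFuns G).card : ℤ) := by
  classical
  set M : Matrix V V ℤ := 1 + G.lapMatrix ℤ with hM_def
  have hM : ∀ i j : V, M i j = if i = j then 1 + (G.degree i : ℤ)
      else (if G.Adj i j then -1 else 0) := by
    intro i j
    by_cases h : i = j
    · subst h
      simp [hM_def, Matrix.add_apply, Matrix.one_apply, SimpleGraph.lapMatrix,
        SimpleGraph.degMatrix, Matrix.sub_apply, Matrix.diagonal_apply_eq]
    · simp only [hM_def, Matrix.add_apply, Matrix.one_apply_ne h, SimpleGraph.lapMatrix,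
        SimpleGraph.degMatrix, Matrix.sub_apply, Matrix.diagonal_apply_ne _ h,
        SimpleGraph.adjMatrix_apply, zero_sub, zero_add, if_neg h]
      split_ifs <;> norm_num
  -- families of allowed choices and weights
  set sfin : Equiv.Perm V → V → Finset (Option V) :=
    fun σ i => if σ i = i then opts G i else {some (σ i)} with hsfin_def
  set w : Equiv.Perm V → V → ℤ :=
    fun σ i => if σ i = i then 1 else (if G.Adj (σ i) i then -1 else 0) with hw_def
  have entry_sum : ∀ (σ : Equiv.Perm V) (i : V), M (σ i) i = ∑ _o ∈ sfin σ i, w σ i := by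
    intro σ i
    by_cases h : σ i = i
    · rw [hsfin_def, hw_def]
      simp only [if_pos h, Finset.sum_const, nsmul_eq_mul, mul_one]
      rw [h, hM i i, if_pos rfl, card_opts]
      push_cast
      ring
    · rw [hsfin_def, hw_def]
      simp only [if_neg h, Finset.sum_singleton]
      rw [hM (σ i) i, if_neg h]
  set T : Equiv.Perm V → (V → Option V) → ℤ :=
    fun σ g => ∏ i, (if g i ∈ sfin σ i then w σ i else 0) with hT_def
  have claim1 : ∀ σ : Equiv.Perm V, ∏ i, M (σ i) i = ∑ g : V → Option V, T σ g := by
    intro σ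
    calc ∏ i, M (σ i) i = ∏ i, ∑ _o ∈ sfin σ i, w σ i := by
          exact Finset.prod_congr rfl fun i _ => entry_sum σ i
      _ = ∑ x ∈ Fintype.piFinset (sfin σ), ∏ i, w σ i :=
          Finset.prod_univ_sum (sfin σ) (fun i _ => w σ i)
      _ = ∑ x ∈ Fintype.piFinset (sfin σ), T σ x := by
          refine Finset.sum_congr rfl fun x hx => ?_
          rw [Fintype.mem_piFinset] at hx
          exact (Finset.prod_congr rfl fun i _ => by rw [if_pos (hx i)]).symm
      _ = ∑ g : V → Option V, T σ g := by
          refine Finset.sum_subset (Finset.subset_univ _) fun g _ hg => ?_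
          rw [Fintype.mem_piFinset] at hg
          push_neg at hg
          obtain ⟨i, hi⟩ := hg
          exact Finset.prod_eq_zero (Finset.mem_univ i) (if_neg hi)
  have claim2 : ∀ (σ : Equiv.Perm V) (g : V → Option V),
      (Equiv.Perm.sign σ : ℤ) * T σ g =
        if Valid G g ∧ Compat g σ then eps σ else 0 := by
    intro σ g
    by_cases hval : Valid G g
    · by_cases hcomp : Compat g σ
      · rw [if_pos ⟨hval, hcomp⟩]
        have hfac : ∀ i : V, (if g i ∈ sfin σ i then w σ i else 0) =
            (if σ i = i then 1 else -1) := by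
          intro i
          by_cases h : σ i = i
          · have hmem : g i ∈ sfin σ i := by
              rw [hsfin_def]
              simp only [if_pos h]
              rcases Option.eq_none_or_eq_some (g i) with hg | ⟨u, hg⟩
              · rw [hg]; exact (mem_opts G).mpr (Or.inl rfl)
              · rw [hg]; exact (mem_opts G).mpr (Or.inr ⟨u, rfl, hval i u hg⟩)
            rw [if_pos hmem, hw_def]
            simp [h]
          · have hgi : g i = some (σ i) := hcomp i h
            have hadj : G.Adj (σ i) i := (hval i (σ i) hgi).symm
            have hmem : g i ∈ sfin σ i := by
              rw [hsfin_def]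
              simp only [if_neg h]
              rw [hgi]
              exact Finset.mem_singleton_self _
            rw [if_pos hmem, hw_def]
            simp [h, hadj]
        have : T σ g = (-1) ^ σ.support.card := by
          rw [hT_def]
          simp only
          rw [Finset.prod_congr rfl fun i _ => hfac i]
          have : ∀ i : V, (if σ i = i then (1:ℤ) else -1) =
              (if ¬ (σ i = i) then (-1:ℤ) else 1) := by
            intro i; by_cases h : σ i = i <;> simp [h]
          rw [Finset.prod_congr rfl fun i _ => this i, ← Finset.prod_filter]
          rw [show Finset.univ.filter (fun i => ¬ σ i = i) = σ.support from rfl]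
          exact Finset.prod_const _
        rw [this]
        rfl
      · rw [if_neg (fun h => hcomp h.2)]
        obtain ⟨i, hi⟩ : ∃ i, σ i ≠ i ∧ g i ≠ some (σ i) := by
          simp only [Compat, not_forall] at hcomp
          obtain ⟨i, hi, hgi⟩ := hcomp
          exact ⟨i, hi, hgi⟩
        have : (if g i ∈ sfin σ i then w σ i else 0) = 0 := by
          rw [hsfin_def]
          simp only [if_neg hi.1]
          rw [if_neg (by simpa using hi.2)]
        rw [hT_def]
        simp only
        rw [Finset.prod_eq_zero (Finset.mem_univ i) this, mul_zero]
    · rw [if_neg (fun h => hval h.1)]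
      obtain ⟨i, u, hgi, hadj⟩ : ∃ i u, g i = some u ∧ ¬ G.Adj i u := by
        simp only [Valid, not_forall] at hval
        obtain ⟨i, u, h1, h2⟩ := hval
        exact ⟨i, u, h1, h2⟩
      have : (if g i ∈ sfin σ i then w σ i else 0) = 0 := by
        rw [hsfin_def, hw_def]
        by_cases h : σ i = i
        · simp only [if_pos h]
          rw [if_neg]
          rw [mem_opts]
          push_neg
          refine ⟨by rw [hgi]; exact Option.some_ne_none u, ?_⟩
          intro x hx
          rw [hgi] at hx
          obtain rfl : u = x := Option.some_injective _ hx
          exact fun hc => hadj hc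
        · simp only [if_neg h]
          by_cases hg : g i ∈ ({some (σ i)} : Finset (Option V))
          · rw [if_pos hg]
            rw [Finset.mem_singleton, hgi] at hg
            obtain rfl : u = σ i := Option.some_injective _ hg
            rw [if_neg (fun hc => hadj hc.symm)]
          · rw [if_neg hg]
      rw [hT_def]
      simp only
      rw [Finset.prod_eq_zero (Finset.mem_univ i) this, mul_zero]
  calc M.det = ∑ σ : Equiv.Perm V, (Equiv.Perm.sign σ : ℤ) * ∏ i, M (σ i) i :=
        Matrix.det_apply' M
    _ = ∑ σ : Equiv.Perm V, ∑ g : V → Option V,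
          (Equiv.Perm.sign σ : ℤ) * T σ g := by
        refine Finset.sum_congr rfl fun σ _ => ?_
        rw [claim1 σ, Finset.mul_sum]
    _ = ∑ g : V → Option V, ∑ σ : Equiv.Perm V,
          (Equiv.Perm.sign σ : ℤ) * T σ g := Finset.sum_comm
    _ = ∑ g : V → Option V, (if g ∈ treeFuns G then 1 else 0) := by
        refine Finset.sum_congr rfl fun g _ => ?_
        rw [Finset.sum_congr rfl fun σ _ => claim2 σ g]
        by_cases hval : Valid G g
        · have : ∀ σ : Equiv.Perm V, (if Valid G g ∧ Compat g σ then eps σ else 0) =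
              (if Compat g σ then eps σ else 0) := by
            intro σ; by_cases h : Compat g σ <;> simp [h, hval]
          rw [Finset.sum_congr rfl fun σ _ => this σ]
          rw [← Finset.sum_filter]
          by_cases hacyc : Acyc g
          · rw [show (Finset.univ.filter fun σ => Compat g σ) = compatFinset g from by
              simp [compatFinset]]
            rw [sum_compat_of_acyc hacyc, if_pos]
            simp [treeFuns, hval, hacyc]
          · rw [show (Finset.univ.filter fun σ => Compat g σ) = compatFinset g from by
              simp [compatFinset]]
            rw [sum_compat_of_not_acyc hval hacyc, if_neg]
            simp [treeFuns, hacyc]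
        · rw [if_neg (by simp [treeFuns, hval])]
          rw [Finset.sum_congr rfl fun σ _ => if_neg (fun h => hval h.1)]
          simp
    _ = ((treeFuns G).card : ℤ) := by
        rw [Finset.sum_ite_mem, Finset.univ_inter, Finset.sum_const, nsmul_eq_mul, mul_one]

end PartA


section PartB

variable {G : SimpleGraph V}

/-- The spanning subgraph of the cone determined by a parent map. -/
def graphOf (g : V → Option V) : SimpleGraph (Option V) :=
  SimpleGraph.fromRel (fun x y => ∃ v, x = some v ∧ g v = y)

lemma graphOf_adj {g : V → Option V} {x y : Option V} :
    (graphOf g).Adj x y ↔ x ≠ y ∧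
      ((∃ v, x = some v ∧ g v = y) ∨ ∃ v, y = some v ∧ g v = x) :=
  SimpleGraph.fromRel_adj _ x y

lemma cone_adj_some_some {a b : V} : (cone G).Adj (some a) (some b) ↔ G.Adj a b := by
  rw [cone, SimpleGraph.fromRel_adj]
  constructor
  · rintro ⟨hne, (h | h) | (h | h)⟩
    · exact absurd h (Option.some_ne_none a)
    · obtain ⟨a', b', ha, hb, hadj⟩ := h
      obtain rfl := Option.some_injective _ ha
      obtain rfl := Option.some_injective _ hb
      exact hadj
    · exact absurd h (Option.some_ne_none b)
    · obtain ⟨a', b', ha, hb, hadj⟩ := h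
      obtain rfl := Option.some_injective _ ha
      obtain rfl := Option.some_injective _ hb
      exact hadj.symm
  · intro h
    exact ⟨fun hc => G.ne_of_adj h (Option.some_injective _ hc),
      Or.inl (Or.inr ⟨a, b, rfl, rfl, h⟩)⟩

lemma cone_adj_none_some {v : V} : (cone G).Adj none (some v) := by
  rw [cone, SimpleGraph.fromRel_adj]
  exact ⟨fun hc => (Option.some_ne_none v) hc.symm, Or.inl (Or.inl rfl)⟩

lemma graphOf_le {g : V → Option V} (hval : Valid G g) : graphOf g ≤ cone G := by
  intro x y h
  rw [graphOf_adj] at h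
  obtain ⟨hne, (⟨v, rfl, hg⟩ | ⟨v, rfl, hg⟩)⟩ := h
  · rcases Option.eq_none_or_eq_some y with rfl | ⟨u, rfl⟩
    · exact cone_adj_none_some.symm
    · exact cone_adj_some_some.mpr (hval v u hg)
  · rcases Option.eq_none_or_eq_some x with rfl | ⟨u, rfl⟩
    · exact cone_adj_none_some
    · exact (cone_adj_some_some.mpr (hval v u hg)).symm

lemma fix_iter {g : V → Option V} {v : V} (h : g v = some v) (k : ℕ) :
    (stp g)^[k] (some v) = some v := by
  induction k with
  | zero => rfl
  | succ k ih => rw [Function.iterate_succ_apply', ih]; simpa [stp] using h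

lemma graphOf_parent {g : V → Option V} {v : V} (h : g v ≠ some v) :
    (graphOf g).Adj (some v) (g v) :=
  graphOf_adj.mpr ⟨fun hc => h hc.symm, Or.inl ⟨v, rfl, rfl⟩⟩

lemma per_not_none {g : V → Option V} {v : V} (h : Per g v) (m : ℕ) :
    (stp g)^[m] (some v) ≠ none := by
  obtain ⟨q, hq0, hq⟩ := h
  have hmult : ∀ t, (stp g)^[q * t] (some v) = some v := by
    intro t
    induction t with
    | zero => rfl
    | succ t ih =>
      rw [Nat.mul_succ, iter_add, ih, hq]
  intro hnone
  have hle : m ≤ q * m := Nat.le_mul_of_pos_left m (Nat.pos_of_ne_zero hq0)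
  have : (stp g)^[q * m] (some v) = none := by
    have := iter_add g m (q * m - m) (some v)
    rw [Nat.add_sub_cancel' hle] at this
    rw [this, hnone, iter_none]
  rw [hmult m] at this
  exact Option.some_ne_none _ this

/-- The canonical walk to the root along parent pointers. -/
def walkTo (g : V → Option V) : (k : ℕ) → (x : Option V) →
    ((stp g)^[k] x = none) → (graphOf g).Walk x none
  | 0, x, h => (SimpleGraph.Walk.nil' none).copy h.symm rfl
  | _+1, none, _ => SimpleGraph.Walk.nil' none
  | k+1, some v, h =>
      SimpleGraph.Walk.cons
        (graphOf_parent (fun hfix => by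
          rw [fix_iter hfix (k+1)] at h
          exact Option.some_ne_none v h))
        (walkTo g k (g v) (by rwa [Function.iterate_succ_apply] at h))

lemma walkTo_getVert_one {g : V → Option V} {k : ℕ} {v : V}
    (h : (stp g)^[k] (some v) = none) :
    (walkTo g k (some v) h).getVert 1 = g v := by
  cases k with
  | zero => exact absurd h (Option.some_ne_none v)
  | succ k =>
    show (SimpleGraph.Walk.cons _ _).getVert 1 = g v
    rw [SimpleGraph.Walk.getVert_cons_succ, SimpleGraph.Walk.getVert_zero]

lemma walkTo_support {g : V → Option V} : ∀ (k : ℕ) (x : Option V)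
    (h : (stp g)^[k] x = none) (y : Option V), y ∈ (walkTo g k x h).support →
    ∃ m, m ≤ k ∧ (stp g)^[m] x = y := by
  intro k
  induction k with
  | zero =>
    intro x h y hy
    simp only [walkTo, SimpleGraph.Walk.support_copy, SimpleGraph.Walk.support_nil,
      List.mem_singleton] at hy
    have hx : x = none := h
    subst hx
    change y ∈ (SimpleGraph.Walk.nil' none).support at hy
    rw [SimpleGraph.Walk.support_nil, List.mem_singleton] at hy
    exact ⟨0, le_rfl, by rw [hy]; exact h⟩
  | succ k ih =>
    intro x h y hy
    rcases x with _ | v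
    · simp only [walkTo, SimpleGraph.Walk.support_nil, List.mem_singleton] at hy
      exact ⟨0, Nat.zero_le _, by rw [hy]; rfl⟩
    · simp only [walkTo, SimpleGraph.Walk.support_cons, List.mem_cons] at hy
      rcases hy with rfl | hy
      · exact ⟨0, Nat.zero_le _, rfl⟩
      · obtain ⟨m, hm, hiter⟩ := ih (g v) (by rwa [Function.iterate_succ_apply] at h) y hy
        exact ⟨m + 1, by omega, by rwa [Function.iterate_succ_apply]⟩

lemma walkTo_isPath {g : V → Option V} : ∀ (k : ℕ) (x : Option V)
    (h : (stp g)^[k] x = none), (walkTo g k x h).IsPath := by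
  intro k
  induction k with
  | zero =>
    intro x h
    simp only [walkTo]
    exact (SimpleGraph.Walk.isPath_copy _ _ _).mpr SimpleGraph.Walk.IsPath.nil
  | succ k ih =>
    intro x h
    rcases x with _ | v
    · exact SimpleGraph.Walk.IsPath.nil
    · simp only [walkTo]
      rw [SimpleGraph.Walk.cons_isPath_iff]
      refine ⟨ih _ _, fun hmem => ?_⟩
      obtain ⟨m, hm, hiter⟩ := walkTo_support k (g v) _ (some v) hmem
      have hper : Per g v := ⟨m + 1, Nat.succ_ne_zero m, by
        rwa [Function.iterate_succ_apply]⟩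
      exact per_not_none hper (k+1) h

lemma reach_none {g : V → Option V} (hac : Acyc g) (x : Option V) :
    ∃ k, (stp g)^[k] x = none := by
  by_contra hcon
  push_neg at hcon
  obtain ⟨v₀, hv₀⟩ : ∃ v₀, x = some v₀ := by
    rcases Option.eq_none_or_eq_some x with rfl | h
    · exact absurd (iter_none g 0 ▸ rfl) (hcon 0)
    · exact h
  set F : Fin (Fintype.card V + 1) → V := fun k => ((stp g)^[(k : ℕ)] x).getD v₀ with hF
  have hsome : ∀ k : ℕ, (stp g)^[k] x = some (((stp g)^[k] x).getD v₀) := by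
    intro k
    rcases Option.eq_none_or_eq_some ((stp g)^[k] x) with h | ⟨u, h⟩
    · exact absurd h (hcon k)
    · rw [h]; rfl
  obtain ⟨a, b, hab, heq⟩ := Fintype.exists_ne_map_eq_of_card_lt F (by simp)
  have key : ∀ a b : ℕ, a < b → (stp g)^[a] x = (stp g)^[b] x → False := by
    intro a b hlt heq'
    set y := ((stp g)^[a] x).getD v₀ with hy
    have hya : (stp g)^[a] x = some y := hsome a
    refine hac y ⟨b - a, by omega, ?_⟩
    have := iter_add g a (b - a) x
    rw [Nat.add_sub_cancel' hlt.le] at this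
    rw [← hya, ← this, ← heq', hya]
  have hFab : (stp g)^[(a : ℕ)] x = (stp g)^[(b : ℕ)] x := by
    rw [hsome (a : ℕ), hsome (b : ℕ)]
    exact congrArg _ heq
  rcases Nat.lt_or_ge (a : ℕ) (b : ℕ) with h | h
  · exact key a b h hFab
  · rcases Nat.lt_or_ge (b : ℕ) (a : ℕ) with h' | h'
    · exact key b a h' hFab.symm
    · exact hab (Fin.ext (by omega))

lemma graphOf_connected {g : V → Option V} (hac : Acyc g) : (graphOf g).Connected := by
  rw [SimpleGraph.connected_iff]
  refine ⟨fun x y => ?_, ⟨none⟩⟩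
  obtain ⟨kx, hkx⟩ := reach_none hac x
  obtain ⟨ky, hky⟩ := reach_none hac y
  exact ((walkTo g kx x hkx).reachable).trans ((walkTo g ky y hky).reachable).symm

open Classical in
/-- Distance to the root along parent pointers. -/
noncomputable def depth (g : V → Option V) (x : Option V) : ℕ :=
  if h : ∃ k, (stp g)^[k] x = none then Nat.find h else 0

lemma depth_none {g : V → Option V} : depth g none = 0 := by
  rw [depth, dif_pos ⟨0, rfl⟩]
  rw [Nat.find_eq_zero]
  rfl

lemma depth_some {g : V → Option V} (hac : Acyc g) (v : V) :
    depth g (some v) = depth g (g v) + 1 := by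
  have h1 := reach_none hac (some v)
  have h2 := reach_none hac (g v)
  have hstep : ∀ k, (stp g)^[k + 1] (some v) = (stp g)^[k] (g v) := by
    intro k
    rw [Function.iterate_succ_apply]
    rfl
  rw [depth, dif_pos h1, depth, dif_pos h2]
  have hle : Nat.find h1 ≤ Nat.find h2 + 1 :=
    Nat.find_le (by rw [hstep]; exact Nat.find_spec h2)
  have hne : Nat.find h1 ≠ 0 := by
    intro h0
    have := Nat.find_spec h1
    rw [h0] at this
    exact Option.some_ne_none v this
  have hge : Nat.find h2 ≤ Nat.find h1 - 1 := by
    apply Nat.find_le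
    rw [← hstep]
    have : Nat.find h1 - 1 + 1 = Nat.find h1 := by omega
    rw [this]
    exact Nat.find_spec h1
  omega

lemma adj_depth {g : V → Option V} (hac : Acyc g) {x y : Option V}
    (h : (graphOf g).Adj x y) :
    ((∃ v, x = some v ∧ g v = y) ∧ depth g x = depth g y + 1) ∨
    ((∃ v, y = some v ∧ g v = x) ∧ depth g y = depth g x + 1) := by
  rw [graphOf_adj] at h
  obtain ⟨hne, (⟨v, rfl, hg⟩ | ⟨v, rfl, hg⟩)⟩ := h
  · exact Or.inl ⟨⟨v, rfl, hg⟩, by rw [← hg, depth_some hac]⟩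
  · exact Or.inr ⟨⟨v, rfl, hg⟩, by rw [← hg, depth_some hac]⟩

lemma getVert_support_get {W : Type*} {H : SimpleGraph W} {u v : W} (p : H.Walk u v) :
    ∀ i, i < p.support.length → p.support[i]? = some (p.getVert i) := by
  induction p with
  | nil =>
    intro i hi
    simp only [SimpleGraph.Walk.support_nil, List.length_singleton] at hi
    interval_cases i
    simp
  | cons h q ih =>
    intro i hi
    rcases i with _ | i
    · simp
    · simp only [SimpleGraph.Walk.support_cons, List.length_cons] at hi
      rw [SimpleGraph.Walk.support_cons, SimpleGraph.Walk.getVert_cons_succ]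
      rw [List.getElem?_cons_succ]
      exact ih i (by simpa using hi)

lemma cycle_getVert_inj {W : Type*} {H : SimpleGraph W} {x : W} {c : H.Walk x x}
    (hc : c.IsCycle) {i j : ℕ} (hi1 : 1 ≤ i) (hi2 : i ≤ c.length) (hj1 : 1 ≤ j)
    (hj2 : j ≤ c.length) (he : c.getVert i = c.getVert j) : i = j := by
  have hlen : c.support.length = c.length + 1 := SimpleGraph.Walk.length_support c
  have htail : c.support.tail.length = c.length := by
    rw [List.length_tail, hlen]
    omega
  have hnodup := hc.support_nodup
  have hb : ∀ m, 1 ≤ m → m ≤ c.length → m - 1 < c.support.tail.length := by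
    intro m h1 h2
    rw [htail]
    omega
  have hval : ∀ m (h1 : 1 ≤ m) (h2 : m ≤ c.length),
      c.support.tail[m-1]'(hb m h1 h2) = c.getVert m := by
    intro m hm1 hm2
    have hmb : m - 1 + 1 < c.support.length := by rw [hlen]; omega
    have h1 : c.support.tail[m-1]'(hb m hm1 hm2) =
        c.support[m-1+1]'hmb := List.getElem_tail _
    have hm : m - 1 + 1 = m := by omega
    have h2 := getVert_support_get c m (by rw [hlen]; omega)
    rw [List.getElem?_eq_getElem (by rw [hlen]; omega)] at h2
    rw [h1]
    simp_rw [hm]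
    exact Option.some_injective _ h2
  have := (List.Nodup.getElem_inj_iff hnodup
    (hi := hb i hi1 hi2) (hj := hb j hj1 hj2)).mp
    (by rw [hval i hi1 hi2, hval j hj1 hj2]; exact he)
  omega

lemma graphOf_isAcyclic {g : V → Option V} (hac : Acyc g) :
    (graphOf g).IsAcyclic := by
  intro x c hc
  set n := c.length with hn_def
  have hn : 3 ≤ n := hc.three_le_length
  obtain ⟨i₀, hi₀mem, hmax⟩ := Finset.exists_max_image (Finset.range n)
    (fun i => depth g (c.getVert i)) ⟨0, Finset.mem_range.mpr (by omega)⟩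
  rw [Finset.mem_range] at hi₀mem
  have hmax' : ∀ j, j ∈ Finset.range n → depth g (c.getVert j) ≤ depth g (c.getVert i₀) :=
    fun j hj => hmax j hj
  set prev := if i₀ = 0 then n - 1 else i₀ - 1 with hprev_def
  have adj1 : (graphOf g).Adj (c.getVert i₀) (c.getVert (i₀ + 1)) :=
    c.adj_getVert_succ hi₀mem
  have adj2 : (graphOf g).Adj (c.getVert prev) (c.getVert i₀) := by
    by_cases h0 : i₀ = 0
    · have := c.adj_getVert_succ (i := n - 1) (by omega)
      have he : c.getVert (n - 1 + 1) = c.getVert i₀ := by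
        rw [show n - 1 + 1 = n from by omega, h0]
        rw [hn_def]
        rw [SimpleGraph.Walk.getVert_length, SimpleGraph.Walk.getVert_zero]
      rw [he] at this
      simpa [hprev_def, h0] using this
    · have := c.adj_getVert_succ (i := i₀ - 1) (by omega)
      have he : c.getVert (i₀ - 1 + 1) = c.getVert i₀ := by
        congr 1
        omega
      rw [he] at this
      simpa [hprev_def, h0] using this
  have hd1 : depth g (c.getVert (i₀ + 1)) ≤ depth g (c.getVert i₀) := by
    by_cases h : i₀ + 1 < n
    · exact hmax' _ (Finset.mem_range.mpr h)
    · have : i₀ + 1 = n := by omega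
      rw [this, hn_def, SimpleGraph.Walk.getVert_length]
      have h0 : c.getVert 0 = x := SimpleGraph.Walk.getVert_zero c
      have hres := hmax' 0 (Finset.mem_range.mpr (by omega))
      rwa [h0] at hres
  have hd2 : depth g (c.getVert prev) ≤ depth g (c.getVert i₀) := by
    refine hmax' _ (Finset.mem_range.mpr ?_)
    rw [hprev_def]
    split_ifs <;> omega
  -- from adj1: the parent of vertex i₀ is vertex i₀+1
  obtain ⟨v, hv, hgv⟩ : ∃ v, c.getVert i₀ = some v ∧ g v = c.getVert (i₀ + 1) := by
    rcases adj_depth hac adj1 with ⟨h1, _⟩ | ⟨_, h2⟩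
    · exact h1
    · omega
  obtain ⟨v', hv', hgv'⟩ : ∃ v', c.getVert i₀ = some v' ∧ g v' = c.getVert prev := by
    rcases adj_depth hac adj2 with ⟨_, h2⟩ | ⟨h1, _⟩
    · omega
    · exact h1
  obtain rfl : v = v' := Option.some_injective _ (hv ▸ hv')
  have heq : c.getVert (i₀ + 1) = c.getVert prev := by rw [← hgv, ← hgv']
  -- translate prev to an index in [1, n]
  set j := if prev = 0 then n else prev with hj_def
  have heq2 : c.getVert (i₀ + 1) = c.getVert j := by
    rw [hj_def]
    split_ifs with h
    · rw [heq, h, hn_def, SimpleGraph.Walk.getVert_length, SimpleGraph.Walk.getVert_zero]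
    · exact heq
  have hji : i₀ + 1 = j := by
    refine cycle_getVert_inj hc (by omega) (by omega) ?_ ?_ heq2
    · rw [hj_def]; split_ifs <;> omega
    · rw [hj_def]
      split_ifs with h
      · omega
      · rw [hprev_def]
        split_ifs <;> omega
  rw [hj_def, hprev_def] at hji
  by_cases h0 : i₀ = 0
  · rw [if_pos h0] at hji
    have : n - 1 ≠ 0 := by omega
    rw [if_neg this] at hji
    omega
  · rw [if_neg h0] at hji
    by_cases h1 : i₀ - 1 = 0
    · rw [if_pos h1] at hji
      omega
    · rw [if_neg h1] at hji
      omega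

lemma graphOf_isTree {g : V → Option V} (hac : Acyc g) : (graphOf g).IsTree :=
  ⟨graphOf_connected hac, graphOf_isAcyclic hac⟩

section Inverse

variable {H : SimpleGraph (Option V)}

/-- The unique path from `x` to the root in a tree. -/
noncomputable def pthD (ht : H.IsTree) (x : Option V) : H.Walk x none :=
  (ht.existsUnique_path x none).exists.choose

lemma pth_isPath (ht : H.IsTree) (x : Option V) : (pthD ht x).IsPath :=
  (ht.existsUnique_path x none).exists.choose_spec

lemma pth_unique (ht : H.IsTree) {x : Option V} (q : H.Walk x none) (hq : q.IsPath) :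
    q = pthD ht x :=
  (ht.existsUnique_path x none).unique hq (pth_isPath ht x)

/-- The parent map of a spanning tree of the cone. -/
noncomputable def gOf (ht : H.IsTree) : V → Option V :=
  fun v => (pthD ht (some v)).getVert 1

lemma pth_not_nil (ht : H.IsTree) (v : V) : ¬ (pthD ht (some v)).Nil :=
  SimpleGraph.Walk.not_nil_of_ne (Option.some_ne_none v)

lemma gOf_adj (ht : H.IsTree) (v : V) : H.Adj (some v) (gOf ht v) :=
  SimpleGraph.Walk.adj_snd (pth_not_nil ht v)

lemma gOf_valid (ht : H.IsTree) (hle : H ≤ cone G) : Valid G (gOf ht) := by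
  intro v u h
  have := hle (gOf_adj ht v)
  rw [h] at this
  exact cone_adj_some_some.mp this

lemma gOf_step (ht : H.IsTree) (v : V) :
    (pthD ht (some v)).length = (pthD ht (gOf ht v)).length + 1 := by
  have htail : ((pthD ht (some v)).tail : H.Walk _ none) = pthD ht (gOf ht v) :=
    pth_unique ht _ ((pth_isPath ht (some v)).tail)
  have hlen := SimpleGraph.Walk.length_tail_add_one (pth_not_nil ht v)
  rw [htail] at hlen
  exact hlen.symm

lemma gOf_iter_len (ht : H.IsTree) :
    ∀ (k : ℕ) (v w : V), (stp (gOf ht))^[k] (some v) = some w →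
      (pthD ht (some w)).length + k ≤ (pthD ht (some v)).length := by
  intro k
  induction k with
  | zero =>
    intro v w h
    obtain rfl : v = w := Option.some_injective _ h
    omega
  | succ k ih =>
    intro v w h
    rw [Function.iterate_succ_apply] at h
    have hstp : stp (gOf ht) (some v) = gOf ht v := rfl
    rw [hstp] at h
    rcases Option.eq_none_or_eq_some (gOf ht v) with hn | ⟨u, hu⟩
    · rw [hn, iter_none] at h
      exact absurd h.symm (Option.some_ne_none w)
    · rw [hu] at h
      have := ih u w h
      have hstep := gOf_step ht v
      rw [hu] at hstep
      omega

lemma gOf_acyc (ht : H.IsTree) : Acyc (gOf ht) := by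
  intro v ⟨k, hk0, hk⟩
  have := gOf_iter_len ht k v v hk
  omega

lemma gOf_graphOf (ht : H.IsTree) (hle : H ≤ cone G) : graphOf (gOf ht) = H := by
  have claim : ∀ x y : Option V, H.Adj x y →
      (∃ v, x = some v ∧ gOf ht v = y) ∨ (∃ v, y = some v ∧ gOf ht v = x) := by
    intro x y h
    rcases x with _ | u
    · rcases y with _ | v
      · exact absurd h H.irrefl
      · -- edge none -- some v : parent of v is none
        right
        refine ⟨v, rfl, ?_⟩
        have hpath : (SimpleGraph.Walk.cons h.symm (SimpleGraph.Walk.nil' none)).IsPath := by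
          rw [SimpleGraph.Walk.cons_isPath_iff]
          exact ⟨SimpleGraph.Walk.IsPath.nil, by simp⟩
        have := pth_unique ht _ hpath
        rw [gOf, ← this]
        rfl
    · rcases y with _ | w
      · left
        refine ⟨u, rfl, ?_⟩
        have hpath : (SimpleGraph.Walk.cons h (SimpleGraph.Walk.nil' none)).IsPath := by
          rw [SimpleGraph.Walk.cons_isPath_iff]
          exact ⟨SimpleGraph.Walk.IsPath.nil, by simp⟩
        have := pth_unique ht _ hpath
        rw [gOf, ← this]
        rfl
      · -- edge between some u and some w
        by_cases hmem : (some u : Option V) ∈ (pthD ht (some w)).support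
        · right
          refine ⟨w, rfl, ?_⟩
          have htk := (pth_isPath ht (some w)).takeUntil hmem
          have hsingle : (SimpleGraph.Walk.cons h.symm
              (SimpleGraph.Walk.nil' (some u)) : H.Walk (some w) (some u)).IsPath := by
            rw [SimpleGraph.Walk.cons_isPath_iff]
            refine ⟨SimpleGraph.Walk.IsPath.nil, by simp [(H.ne_of_adj h.symm)]⟩
          have huniq := (ht.existsUnique_path (some w) (some u)).unique htk hsingle
          have hspec := SimpleGraph.Walk.take_spec (pthD ht (some w)) hmem
          rw [gOf, ← hspec, huniq]
          rw [SimpleGraph.Walk.getVert_append]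
          simp
        · left
          refine ⟨u, rfl, ?_⟩
          have hpath : (SimpleGraph.Walk.cons h (pthD ht (some w))).IsPath :=
            (pth_isPath ht (some w)).cons hmem
          have := pth_unique ht _ hpath
          rw [gOf, ← this]
          rw [SimpleGraph.Walk.getVert_cons_succ, SimpleGraph.Walk.getVert_zero]
  ext x y
  rw [graphOf_adj]
  constructor
  · rintro ⟨hne, (⟨v, rfl, hg⟩ | ⟨v, rfl, hg⟩)⟩
    · rw [← hg]; exact gOf_adj ht v
    · rw [← hg]; exact (gOf_adj ht v).symm
  · intro h
    exact ⟨H.ne_of_adj h, claim x y h⟩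

end Inverse

lemma gOf_graphOf_eq {H : SimpleGraph (Option V)} (ht : H.IsTree) {g : V → Option V}
    (hval : Valid G g) (hac : Acyc g) (hH : H = graphOf g) : gOf ht = g := by
  subst hH
  funext v
  obtain ⟨k, hk⟩ := reach_none hac (some v)
  have hpath := walkTo_isPath k (some v) hk
  have huniq := pth_unique ht _ hpath
  rw [gOf, ← huniq]
  exact walkTo_getVert_one hk

open Classical in
theorem card_trees_eq (G : SimpleGraph V) :
    Nat.card {H : SimpleGraph (Option V) // H ≤ cone G ∧ H.IsTree} = (treeFuns G).card := by
  classical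
  have treeFuns_mem : ∀ g : V → Option V, g ∈ treeFuns G ↔ Valid G g ∧ Acyc g := by
    intro g; simp [treeFuns]
  -- the forward map
  set Φ : {g : V → Option V // g ∈ treeFuns G} →
      {H : SimpleGraph (Option V) // H ≤ cone G ∧ H.IsTree} :=
    fun g => ⟨graphOf g.1, graphOf_le ((treeFuns_mem g.1).mp g.2).1,
      graphOf_isTree ((treeFuns_mem g.1).mp g.2).2⟩ with hΦ
  have hbij : Function.Bijective Φ := by
    constructor
    · rintro ⟨g₁, hg₁⟩ ⟨g₂, hg₂⟩ heq
      have h1 := (treeFuns_mem g₁).mp hg₁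
      have h2 := (treeFuns_mem g₂).mp hg₂
      simp only [hΦ, Subtype.mk.injEq] at heq
      have ht₁ : (graphOf g₁).IsTree := graphOf_isTree h1.2
      have e1 : gOf ht₁ = g₁ := gOf_graphOf_eq ht₁ h1.1 h1.2 rfl
      have e2 : gOf ht₁ = g₂ := gOf_graphOf_eq ht₁ h2.1 h2.2 heq
      exact Subtype.ext (e1.symm.trans e2)
    · rintro ⟨H, hle, ht⟩
      refine ⟨⟨gOf ht, (treeFuns_mem _).mpr ⟨gOf_valid ht hle, gOf_acyc ht⟩⟩, ?_⟩
      simp only [hΦ, Subtype.mk.injEq]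
      exact gOf_graphOf ht hle
  rw [← Nat.card_eq_of_bijective Φ hbij]
  rw [Nat.card_eq_fintype_card, Fintype.card_coe]

end PartB

end ConeMTT

theorem numSpanningTrees_cone_eq_abs_charpoly_eval_neg_one
    {V : Type*} [Fintype V] [DecidableEq V] (G : SimpleGraph V) :
    numSpanningTrees (cone G) = ((lap G).charpoly.eval (-1)).natAbs := by
  classical
  letI : DecidableRel G.Adj := Classical.decRel _
  have hlap : lap G = G.lapMatrix ℤ := by
    unfold lap
    congr!
  have hdet := ConeMTT.det_eq_card G
  have hcard := ConeMTT.card_trees_eq G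
  have hchar : (lap G).charpoly.eval (-1) =
      ((-1 : ℤ)) ^ Fintype.card V * (1 + G.lapMatrix ℤ).det := by
    rw [Matrix.charpoly]
    have h1 := RingHom.map_det (Polynomial.evalRingHom (-1) : Polynomial ℤ →+* ℤ)
      (lap G).charmatrix
    rw [RingHom.mapMatrix_apply] at h1
    rw [show ((lap G).charmatrix.det).eval (-1) =
      (Polynomial.evalRingHom (-1) : Polynomial ℤ →+* ℤ) (lap G).charmatrix.det from rfl, h1]
    have h2 : (lap G).charmatrix.map (Polynomial.evalRingHom (-1) : Polynomial ℤ →+* ℤ) =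
        -(1 + G.lapMatrix ℤ) := by
      ext i j
      by_cases h : i = j
      · subst h
        rw [Matrix.map_apply, Matrix.charmatrix_apply_eq]
        simp [hlap.symm, Matrix.add_apply, Matrix.one_apply]
        ring
      · rw [Matrix.map_apply, Matrix.charmatrix_apply_ne _ _ _ h]
        simp [hlap.symm, Matrix.add_apply, Matrix.one_apply_ne h]
    rw [h2, Matrix.det_neg]
  rw [hchar, hdet]
  show Nat.card {H : SimpleGraph (Option V) // H ≤ cone G ∧ H.IsTree} = _
  rw [hcard, Int.natAbs_mul, Int.natAbs_pow]
  simp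
end

section
/- Let G₁ and G₂ be graphs of orders m and n respectively, with Laplacian characteristic polynomials χ_{G₁} and χ_{G₂}. Then the Laplacian characteristic polynomial of the join G₁ * G₂ satisfies χ_{G₁*G₂}(x) = [x(x − n − m)/((x − n)(x − m))] · χ_{G₁}(x − n) · χ_{G₂}(x − m) (as an identity of rational functions, equivalently of polynomials after clearing denominators). -/
open SimpleGraph Polynomial

/-- The join of two graphs: their disjoint union together with all edges between the
two parts. -/
def joinGraph {V₁ V₂ : Type*} (G₁ : SimpleGraph V₁) (G₂ : SimpleGraph V₂) :
    SimpleGraph (V₁ ⊕ V₂) :=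
  SimpleGraph.fromRel (fun x y =>
    (∃ a b, x = Sum.inl a ∧ y = Sum.inl b ∧ G₁.Adj a b) ∨
    (∃ a b, x = Sum.inr a ∧ y = Sum.inr b ∧ G₂.Adj a b) ∨
    (∃ a b, x = Sum.inl a ∧ y = Sum.inr b))

set_option synthInstance.maxHeartbeats 1000000
set_option maxHeartbeats 3200000

open Matrix

section KeyDet
theorem key_det {K : Type*} [Field K] {V₁ V₂ : Type*} [Fintype V₁] [Fintype V₂]
    [DecidableEq V₁] [DecidableEq V₂]
    (A : Matrix V₁ V₁ K) (B : Matrix V₂ V₂ K) (α β : K)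
    (hα : α ≠ 0) (hβ : β ≠ 0)
    (hA : A *ᵥ ((fun _ => 1) : V₁ → K) = α • ((fun _ => 1) : V₁ → K))
    (hB : B *ᵥ ((fun _ => 1) : V₂ → K) = β • ((fun _ => 1) : V₂ → K))
    (hdA : IsUnit A.det) (hdB : IsUnit B.det) :
    (Matrix.fromBlocks A (Matrix.of fun _ _ => 1) (Matrix.of fun _ _ => 1) B).det
      = A.det * B.det * (1 - (Fintype.card V₁) * (Fintype.card V₂) / (α * β)) := by
  have hAinv : A⁻¹ *ᵥ ((fun _ => 1) : V₁ → K) = α⁻¹ • ((fun _ => 1) : V₁ → K) := by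
    have h1 : A⁻¹ *ᵥ (A *ᵥ ((fun _ => 1) : V₁ → K)) = ((fun _ => 1) : V₁ → K) := by
      rw [mulVec_mulVec, Matrix.nonsing_inv_mul _ hdA, one_mulVec]
    rw [hA, mulVec_smul] at h1
    have h2 := congrArg (fun v => α⁻¹ • v) h1
    simpa [smul_smul, inv_mul_cancel₀ hα] using h2
  have hBinv : B⁻¹ *ᵥ ((fun _ => 1) : V₂ → K) = β⁻¹ • ((fun _ => 1) : V₂ → K) := by
    have h1 : B⁻¹ *ᵥ (B *ᵥ ((fun _ => 1) : V₂ → K)) = ((fun _ => 1) : V₂ → K) := by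
      rw [mulVec_mulVec, Matrix.nonsing_inv_mul _ hdB, one_mulVec]
    rw [hB, mulVec_smul] at h1
    have h2 := congrArg (fun v => β⁻¹ • v) h1
    simpa [smul_smul, inv_mul_cancel₀ hβ] using h2
  have hArow : ∀ l, ∑ k, A⁻¹ l k = α⁻¹ := by
    intro l
    simpa [mulVec, dotProduct] using congrFun hAinv l
  have hBrow : ∀ l, ∑ k, B⁻¹ l k = β⁻¹ := by
    intro l
    simpa [mulVec, dotProduct] using congrFun hBinv l
  haveI : Invertible A := A.invertibleOfIsUnitDet hdA
  rw [Matrix.det_fromBlocks₁₁, invOf_eq_nonsing_inv]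
  set c : K := (Fintype.card V₁ : K) * α⁻¹ with hc
  have hSchur : B - (Matrix.of (fun _ _ => 1) : Matrix V₂ V₁ K) * A⁻¹ *
        (Matrix.of fun _ _ => 1 : Matrix V₁ V₂ K)
      = B + Matrix.replicateCol Unit ((fun _ => -c) : V₂ → K) *
          Matrix.replicateRow Unit ((fun _ => 1) : V₂ → K) := by
    ext i j
    simp only [Matrix.sub_apply, Matrix.add_apply, Matrix.mul_apply, Matrix.of_apply,
      Matrix.replicateCol_apply, Matrix.replicateRow_apply, one_mul, mul_one, Finset.sum_const,
      Finset.univ_unique, Finset.sum_singleton]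
    rw [Finset.sum_comm]
    simp [hArow, hc, Finset.sum_comm, mul_comm, sub_eq_add_neg]
  rw [hSchur, Matrix.det_add_replicateCol_mul_replicateRow hdB]
  have hent : ((1 : Matrix Unit Unit K) + Matrix.replicateRow Unit ((fun _ => 1) : V₂ → K) * B⁻¹ *
      Matrix.replicateCol Unit ((fun _ => -c) : V₂ → K)).det
      = 1 - c * ((Fintype.card V₂ : K) * β⁻¹) := by
    rw [Matrix.det_unique]
    simp only [Matrix.add_apply, Matrix.one_apply_eq, Matrix.mul_apply, Matrix.replicateRow_apply,
      Matrix.replicateCol_apply, one_mul]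
    rw [← Finset.sum_mul, Finset.sum_comm]
    simp [hBrow, Finset.sum_const, nsmul_eq_mul]
    ring
  rw [hent, hc]
  field_simp

end KeyDet

section JoinLemmas
variable {V₁ V₂ : Type*} (G₁ : SimpleGraph V₁) (G₂ : SimpleGraph V₂)

@[simp] lemma joinGraph_adj_inl_inl (a b : V₁) :
    (joinGraph G₁ G₂).Adj (Sum.inl a) (Sum.inl b) ↔ G₁.Adj a b := by
  simp only [joinGraph, fromRel_adj, ne_eq, Sum.inl.injEq]
  constructor
  · rintro ⟨hne, h | h⟩ <;>
    · rcases h with ⟨a', b', h1, h2, h3⟩ | ⟨a', b', h1, h2, h3⟩ | ⟨a', b', h1, h2⟩ <;>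
        (simp_all; try exact h3.symm)
  · intro h
    exact ⟨h.ne, Or.inl (Or.inl ⟨a, b, rfl, rfl, h⟩)⟩

@[simp] lemma joinGraph_adj_inr_inr (a b : V₂) :
    (joinGraph G₁ G₂).Adj (Sum.inr a) (Sum.inr b) ↔ G₂.Adj a b := by
  simp only [joinGraph, fromRel_adj, ne_eq, Sum.inr.injEq]
  constructor
  · rintro ⟨hne, h | h⟩ <;>
    · rcases h with ⟨a', b', h1, h2, h3⟩ | ⟨a', b', h1, h2, h3⟩ | ⟨a', b', h1, h2⟩ <;>
        (simp_all; try exact h3.symm)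
  · intro h
    exact ⟨h.ne, Or.inl (Or.inr (Or.inl ⟨a, b, rfl, rfl, h⟩))⟩

@[simp] lemma joinGraph_adj_inl_inr (a : V₁) (b : V₂) :
    (joinGraph G₁ G₂).Adj (Sum.inl a) (Sum.inr b) := by
  simp only [joinGraph, fromRel_adj]
  exact ⟨by simp, Or.inl (Or.inr (Or.inr ⟨a, b, rfl, rfl⟩))⟩

@[simp] lemma joinGraph_adj_inr_inl (a : V₂) (b : V₁) :
    (joinGraph G₁ G₂).Adj (Sum.inr a) (Sum.inl b) :=
  (joinGraph_adj_inl_inr G₁ G₂ b a).symm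

open scoped Classical in
lemma neighborFinset_join_inl [Fintype V₁] [Fintype V₂] (a : V₁) :
    (joinGraph G₁ G₂).neighborFinset (Sum.inl a)
      = (G₁.neighborFinset a).disjSum (Finset.univ : Finset V₂) := by
  ext x
  cases x <;> simp [SimpleGraph.mem_neighborFinset]

open scoped Classical in
lemma neighborFinset_join_inr [Fintype V₁] [Fintype V₂] (b : V₂) :
    (joinGraph G₁ G₂).neighborFinset (Sum.inr b)
      = (Finset.univ : Finset V₁).disjSum (G₂.neighborFinset b) := by
  ext x
  cases x <;> simp [SimpleGraph.mem_neighborFinset]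

open scoped Classical in
lemma degree_join_inl [Fintype V₁] [Fintype V₂] (a : V₁) :
    (joinGraph G₁ G₂).degree (Sum.inl a) = G₁.degree a + Fintype.card V₂ := by
  rw [SimpleGraph.degree, neighborFinset_join_inl, Finset.card_disjSum]
  rfl

open scoped Classical in
lemma degree_join_inr [Fintype V₁] [Fintype V₂] (b : V₂) :
    (joinGraph G₁ G₂).degree (Sum.inr b) = Fintype.card V₁ + G₂.degree b := by
  rw [SimpleGraph.degree, neighborFinset_join_inr, Finset.card_disjSum]
  rfl

lemma lap_join [Fintype V₁] [Fintype V₂] [DecidableEq V₁] [DecidableEq V₂] :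
    lap (joinGraph G₁ G₂) = Matrix.fromBlocks
      (lap G₁ + (Fintype.card V₂ : Matrix V₁ V₁ ℤ)) (Matrix.of fun _ _ => -1)
      (Matrix.of fun _ _ => -1) (lap G₂ + (Fintype.card V₁ : Matrix V₂ V₂ ℤ)) := by
  classical
  ext i j
  cases i <;> cases j <;>
    simp [lap, SimpleGraph.lapMatrix, SimpleGraph.degMatrix, SimpleGraph.adjMatrix,
      ← Matrix.diagonal_natCast, Matrix.diagonal_apply, degree_join_inl, degree_join_inr] <;>
    split_ifs <;> push_cast <;> simp_all <;> ring

end JoinLemmas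

noncomputable def phiInt : Polynomial ℤ →+* RatFunc ℚ :=
  eval₂RingHom (Int.castRingHom (RatFunc ℚ)) (algebraMap (Polynomial ℚ) (RatFunc ℚ) X)

lemma phiInt_apply (p : Polynomial ℤ) :
    phiInt p = eval₂ (Int.castRingHom (RatFunc ℚ)) (algebraMap (Polynomial ℚ) (RatFunc ℚ) X) p :=
  rfl

lemma phiInt_eq : phiInt = ((algebraMap (Polynomial ℚ) (RatFunc ℚ)) : Polynomial ℚ →+* RatFunc ℚ).comp
    (mapRingHom (Int.castRingHom ℚ)) := by
  apply Polynomial.ringHom_ext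
  · intro a
    rw [show (C a : Polynomial ℤ) = (a : Polynomial ℤ) from by simp, map_intCast, map_intCast]
  · simp [phiInt_apply]

lemma phiInt_inj : Function.Injective phiInt := by
  rw [phiInt_eq]
  exact (IsFractionRing.injective (Polynomial ℚ) (RatFunc ℚ)).comp
    (Polynomial.map_injective _ Int.cast_injective)

lemma eval₂_charpoly {V : Type*} [Fintype V] [DecidableEq V] (M : Matrix V V ℤ)
    (s : RatFunc ℚ) :
    eval₂ (Int.castRingHom (RatFunc ℚ)) s M.charpoly
      = (s • (1 : Matrix V V (RatFunc ℚ)) - M.map (Int.cast : ℤ → RatFunc ℚ)).det := by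
  have h := RingHom.map_det (eval₂RingHom (Int.castRingHom (RatFunc ℚ)) s) (charmatrix M)
  rw [show ((eval₂RingHom (Int.castRingHom (RatFunc ℚ)) s) (charmatrix M).det)
      = eval₂ (Int.castRingHom (RatFunc ℚ)) s (charmatrix M).det from rfl] at h
  show eval₂ (Int.castRingHom (RatFunc ℚ)) s (charmatrix M).det = _
  rw [h]
  have hcast : ∀ a : ℤ, eval₂ (Int.castRingHom (RatFunc ℚ)) s ((a : Polynomial ℤ)) = (a : RatFunc ℚ) :=
    fun a => map_intCast (eval₂RingHom (Int.castRingHom (RatFunc ℚ)) s) a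
  congr 1
  ext i j
  by_cases hij : i = j
  · subst hij
    simp [charmatrix_apply_eq, Matrix.map_apply, Matrix.sub_apply, Matrix.smul_apply,
      Matrix.one_apply_eq, smul_eq_mul, hcast]
  · simp [charmatrix_apply_ne _ _ _ hij, Matrix.map_apply, Matrix.sub_apply, Matrix.smul_apply,
      Matrix.one_apply_ne hij, hij, smul_eq_mul, hcast]

lemma eval₂_intCast' (s : RatFunc ℚ) (a : ℤ) :
    eval₂ (Int.castRingHom (RatFunc ℚ)) s ((a : Polynomial ℤ)) = (a : RatFunc ℚ) :=
  map_intCast (eval₂RingHom (Int.castRingHom (RatFunc ℚ)) s) a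

lemma phiInt_charpoly_comp {V : Type*} [Fintype V] [DecidableEq V] (M : Matrix V V ℤ)
    (a : ℤ) :
    phiInt (M.charpoly.comp (X - C a))
      = (((algebraMap (Polynomial ℚ) (RatFunc ℚ) X) - (a : RatFunc ℚ)) •
          (1 : Matrix V V (RatFunc ℚ)) - M.map (Int.cast : ℤ → RatFunc ℚ)).det := by
  rw [phiInt_apply, eval₂_comp, ← eval₂_charpoly]
  congr 1
  simp [eval₂_sub, eval₂_intCast']

lemma phiInt_charpoly {V : Type*} [Fintype V] [DecidableEq V] (M : Matrix V V ℤ) :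
    phiInt M.charpoly
      = ((algebraMap (Polynomial ℚ) (RatFunc ℚ) X) • (1 : Matrix V V (RatFunc ℚ))
          - M.map (Int.cast : ℤ → RatFunc ℚ)).det := by
  rw [phiInt_apply, eval₂_charpoly]

lemma lapMap_mulVec_one {V : Type*} [Fintype V] [DecidableEq V] (G : SimpleGraph V) :
    (lap G).map (Int.cast : ℤ → RatFunc ℚ) *ᵥ ((fun _ => 1) : V → RatFunc ℚ) = 0 := by
  classical
  have hmap : (lap G).map (Int.cast : ℤ → RatFunc ℚ) = G.lapMatrix (RatFunc ℚ) := by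
    ext i j
    simp [lap, SimpleGraph.lapMatrix, SimpleGraph.degMatrix, SimpleGraph.adjMatrix,
      Matrix.diagonal, Matrix.map_apply, apply_ite (Int.cast : ℤ → RatFunc ℚ)]
  rw [hmap, SimpleGraph.lapMatrix_mulVec_const_eq_zero]

/-- Kelmans' formula for the Laplacian characteristic polynomial of a join:
`(x-n)(x-m) χ_{G₁*G₂}(x) = x (x-n-m) χ_{G₁}(x-n) χ_{G₂}(x-m)`,
stated as a polynomial identity after clearing denominators, with `m = |V₁|`, `n = |V₂|`. -/
theorem charpoly_joinGraph {V₁ V₂ : Type*} [Fintype V₁] [Fintype V₂]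
    [DecidableEq V₁] [DecidableEq V₂]
    (G₁ : SimpleGraph V₁) (G₂ : SimpleGraph V₂)
    (m n : ℕ) (hm : m = Fintype.card V₁) (hn : n = Fintype.card V₂) :
    (X - C (n : ℤ)) * (X - C (m : ℤ)) * (lap (joinGraph G₁ G₂)).charpoly =
      X * (X - C ((n : ℤ) + m)) * ((lap G₁).charpoly.comp (X - C (n : ℤ))) *
        ((lap G₂).charpoly.comp (X - C (m : ℤ))) := by
  classical
  subst hm; subst hn
  set F := RatFunc ℚ with hF
  set t : F := algebraMap (Polynomial ℚ) (RatFunc ℚ) X with ht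
  set a : ℤ := (Fintype.card V₂ : ℤ) with ha
  set b : ℤ := (Fintype.card V₁ : ℤ) with hb
  set A : Matrix V₁ V₁ F :=
    (t - (a : F)) • (1 : Matrix V₁ V₁ F) - (lap G₁).map (Int.cast : ℤ → F) with hA
  set B : Matrix V₂ V₂ F :=
    (t - (b : F)) • (1 : Matrix V₂ V₂ F) - (lap G₂).map (Int.cast : ℤ → F) with hB
  -- nonvanishing of t - a, t - b
  have hXa : (X - C a : Polynomial ℤ) ≠ 0 := Polynomial.X_sub_C_ne_zero a
  have hta : t - (a : F) ≠ 0 := by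
    have : phiInt (X - C a) = t - (a : F) := by
      rw [_root_.map_sub, phiInt_apply, phiInt_apply]
      simp [eval₂_X, eval₂_C, eval₂_intCast', ht, RatFunc.algebraMap_X]
    rw [← this]
    exact (map_ne_zero_iff phiInt phiInt_inj).mpr hXa
  have htb : t - (b : F) ≠ 0 := by
    have : phiInt (X - C b) = t - (b : F) := by
      rw [_root_.map_sub, phiInt_apply, phiInt_apply]
      simp [eval₂_X, eval₂_C, eval₂_intCast', ht, RatFunc.algebraMap_X]
    rw [← this]
    exact (map_ne_zero_iff phiInt phiInt_inj).mpr (Polynomial.X_sub_C_ne_zero b)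
  -- determinants of A and B
  have hdetA : A.det = phiInt ((lap G₁).charpoly.comp (X - C a)) :=
    (phiInt_charpoly_comp _ _).symm
  have hdetB : B.det = phiInt ((lap G₂).charpoly.comp (X - C b)) :=
    (phiInt_charpoly_comp _ _).symm
  have hAunit : IsUnit A.det := by
    rw [hdetA, isUnit_iff_ne_zero]
    exact (map_ne_zero_iff phiInt phiInt_inj).mpr
      ((Matrix.charpoly_monic _).comp_X_sub_C _).ne_zero
  have hBunit : IsUnit B.det := by
    rw [hdetB, isUnit_iff_ne_zero]
    exact (map_ne_zero_iff phiInt phiInt_inj).mpr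
      ((Matrix.charpoly_monic _).comp_X_sub_C _).ne_zero
  -- eigenvector
  have hAvec : A *ᵥ ((fun _ => 1) : V₁ → F) = (t - (a : F)) • ((fun _ => 1) : V₁ → F) := by
    rw [hA, Matrix.sub_mulVec, Matrix.smul_mulVec, Matrix.one_mulVec,
      lapMap_mulVec_one, sub_zero]
  have hBvec : B *ᵥ ((fun _ => 1) : V₂ → F) = (t - (b : F)) • ((fun _ => 1) : V₂ → F) := by
    rw [hB, Matrix.sub_mulVec, Matrix.smul_mulVec, Matrix.one_mulVec,
      lapMap_mulVec_one, sub_zero]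
  -- block structure
  have hN : t • (1 : Matrix (V₁ ⊕ V₂) (V₁ ⊕ V₂) F)
        - (lap (joinGraph G₁ G₂)).map (Int.cast : ℤ → F)
      = Matrix.fromBlocks A (Matrix.of fun _ _ => 1) (Matrix.of fun _ _ => 1) B := by
    rw [lap_join]
    ext i j
    cases i <;> cases j <;>
      simp [hA, hB, Matrix.map_apply, Matrix.sub_apply, Matrix.add_apply, Matrix.smul_apply,
        Matrix.one_apply, smul_eq_mul, ← Matrix.diagonal_natCast, Matrix.diagonal_apply,
        apply_ite (Int.cast : ℤ → F), ha, hb] <;>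
      split_ifs <;> push_cast <;> ring
  -- put everything together
  apply phiInt_inj
  simp only [_root_.map_mul]
  rw [phiInt_charpoly, hN,
    key_det A B (t - (a : F)) (t - (b : F)) hta htb hAvec hBvec hAunit hBunit,
    ← hdetA, ← hdetB]
  have h1 : phiInt (X - C a) = t - (a : F) := by
    rw [_root_.map_sub, phiInt_apply, phiInt_apply]; simp [eval₂_X, eval₂_C, eval₂_intCast', ht, RatFunc.algebraMap_X]
  have h2 : phiInt (X - C b) = t - (b : F) := by
    rw [_root_.map_sub, phiInt_apply, phiInt_apply]; simp [eval₂_X, eval₂_C, eval₂_intCast', ht, RatFunc.algebraMap_X]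
  have h3 : phiInt X = t := by rw [phiInt_apply]; simp [eval₂_X, ht, RatFunc.algebraMap_X]
  have h4 : phiInt (X - C (a + b)) = t - ((a : F) + (b : F)) := by
    rw [_root_.map_sub, phiInt_apply, phiInt_apply]; simp [eval₂_X, eval₂_C, eval₂_intCast', ht, RatFunc.algebraMap_X]
  rw [h1, h2, h3, h4]
  have hca : ((Fintype.card V₂ : ℕ) : F) = (a : F) := by rw [ha]; push_cast; ring
  have hcb : ((Fintype.card V₁ : ℕ) : F) = (b : F) := by rw [hb]; push_cast; ring
  rw [hca, hcb]
  field_simp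
  ring
end

section
/- Let G be a finite connected graph on n vertices. The Jacobian (critical group) of the cone over G is isomorphic to the cokernel of the ℤ-linear operator Iₙ + L(G) : ℤⁿ → ℤⁿ, where L(G) is the Laplacian of G. -/
open SimpleGraph

open scoped Classical in
/-- The cokernel `ℤ^α / im M` of an integer matrix `M`. -/
noncomputable abbrev coker {α : Type*} [Fintype α] (M : Matrix α α ℤ) :=
  (α → ℤ) ⧸ LinearMap.range (Matrix.toLin' M)

open scoped Classical in
/-- The Jacobian (critical group) of a graph: the torsion subgroup of the cokernel of its
Laplacian acting on `ℤ^V`. -/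
noncomputable def jac {V : Type*} [Fintype V] (G : SimpleGraph V) :=
  Submodule.torsion ℤ (coker (lap G))

namespace ConeJacAux

open Finset Matrix

variable {V : Type*} [Fintype V]

/-- The linear map `x ↦ (x, -∑ x)` from `ℤ^V` to `ℤ^(Option V)`. -/
noncomputable def phi (V : Type*) [Fintype V] : (V → ℤ) →ₗ[ℤ] (Option V → ℤ) where
  toFun x := fun w => Option.elim w (-∑ v, x v) x
  map_add' x y := by
    funext w
    cases w <;> simp [Finset.sum_add_distrib, neg_add] <;> ring
  map_smul' c x := by
    funext w
    cases w <;> simp [Finset.mul_sum]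

@[simp] lemma phi_apply_some (x : V → ℤ) (v : V) : phi V x (some v) = x v := rfl

@[simp] lemma phi_apply_none (x : V → ℤ) : phi V x none = -∑ v, x v := rfl

lemma phi_injective : Function.Injective (phi V) := fun a b h =>
  funext fun v => congrFun h (some v)

@[simp] lemma cone_adj_none_some (G : SimpleGraph V) (v : V) : (cone G).Adj none (some v) := by
  simp [cone]

@[simp] lemma cone_adj_some_none (G : SimpleGraph V) (v : V) : (cone G).Adj (some v) none :=
  ((cone G).adj_symm (cone_adj_none_some G v))

@[simp] lemma cone_adj_none_none (G : SimpleGraph V) : ¬ (cone G).Adj none none :=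
  (cone G).irrefl

@[simp] lemma cone_adj_some_some (G : SimpleGraph V) (a b : V) :
    (cone G).Adj (some a) (some b) ↔ G.Adj a b := by
  constructor
  · rintro ⟨hne, h | h⟩
    · rcases h with h | ⟨c, d, hc, hd, h⟩
      · exact absurd h (by simp)
      · cases hc; cases hd; exact h
    · rcases h with h | ⟨c, d, hc, hd, h⟩
      · exact absurd h (by simp)
      · cases hc; cases hd; exact h.symm
  · intro h
    exact ⟨by simpa using h.ne, Or.inl (Or.inr ⟨a, b, rfl, rfl, h⟩)⟩

open scoped Classical in
lemma lap_mulVec (G : SimpleGraph V) (y : V → ℤ) (v : V) :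
    (lap G *ᵥ y) v = ∑ u, if G.Adj v u then y v - y u else 0 := by
  show (G.lapMatrix ℤ *ᵥ y) v = _
  rw [SimpleGraph.lapMatrix_mulVec_apply, SimpleGraph.degree_eq_sum_if_adj,
    neighborFinset_eq_filter, Finset.sum_filter, Finset.sum_mul]
  simp_rw [ite_mul, one_mul, zero_mul, ← Finset.sum_sub_distrib, ite_sub_ite, sub_zero]

open scoped Classical in
lemma sum_lap_mulVec (G : SimpleGraph V) (y : V → ℤ) :
    ∑ v, (lap G *ᵥ y) v = 0 := by
  have hsymm : ∀ u v : V, lap G v u = lap G u v := by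
    intro u v
    have h := (SimpleGraph.isSymm_lapMatrix G (R := ℤ))
    calc lap G v u = (G.lapMatrix ℤ)ᵀ u v := rfl
    _ = lap G u v := by rw [h]; rfl
  have hrow : ∀ u : V, ∑ v, lap G v u = 0 := by
    intro u
    have h0 := congrFun (SimpleGraph.lapMatrix_mulVec_const_eq_zero (R := ℤ) G) u
    simp only [mulVec, dotProduct, mul_one] at h0
    calc ∑ v, lap G v u = ∑ v, lap G u v := by simp_rw [hsymm]
    _ = 0 := h0
  calc ∑ v, (lap G *ᵥ y) v = ∑ v, ∑ u, lap G v u * y u := rfl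
  _ = ∑ u, (∑ v, lap G v u) * y u := by
      rw [Finset.sum_comm]; simp_rw [Finset.sum_mul]
  _ = 0 := by simp [hrow]

lemma lap_mulVec_const (G : SimpleGraph V) (c : ℤ) :
    lap G *ᵥ (fun _ => c) = 0 := by
  classical
  funext v
  rw [lap_mulVec]
  simp

open scoped Classical in
lemma lap_cone_mulVec [DecidableEq V] (G : SimpleGraph V) (y : Option V → ℤ) (hy : y none = 0) :
    lap (cone G) *ᵥ y = phi V ((1 + lap G) *ᵥ (fun v => y (some v))) := by
  funext w
  cases w with
  | none =>
    rw [lap_mulVec, phi_apply_none, Fintype.sum_option]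
    simp only [cone_adj_none_none, if_false, zero_add, cone_adj_none_some, if_true, hy, zero_sub]
    rw [Finset.sum_neg_distrib]
    congr 1
    have hsum : ∀ v, ((1 + lap G) *ᵥ (fun v => y (some v))) v
        = y (some v) + (lap G *ᵥ (fun v => y (some v))) v := by
      intro v
      rw [add_mulVec, one_mulVec]
      rfl
    simp_rw [hsum, Finset.sum_add_distrib, sum_lap_mulVec, add_zero]
  | some v =>
    rw [lap_mulVec, phi_apply_some, Fintype.sum_option, add_mulVec, one_mulVec,
      Pi.add_apply, lap_mulVec]
    simp only [cone_adj_some_none, if_true, hy, sub_zero, cone_adj_some_some]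

end ConeJacAux

open ConeJacAux Finset Matrix in
theorem jac_cone_aux {V : Type*} [Fintype V] [DecidableEq V] (G : SimpleGraph V) :
    Nonempty (jac (cone G) ≃+ coker (1 + lap G)) := by
  classical
  -- the determinant of `1 + lap G` is nonzero
  have hdet : ((1 : Matrix V V ℤ) + lap G).det ≠ 0 := by
    have hmap : ((1 : Matrix V V ℤ) + lap G).map (Int.castRingHom ℝ)
        = (1 : Matrix V V ℝ) + G.lapMatrix ℝ := by
      ext i j
      simp only [Matrix.map_apply, Matrix.add_apply, Matrix.one_apply, lap,
        SimpleGraph.lapMatrix, SimpleGraph.degMatrix, SimpleGraph.adjMatrix,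
        Matrix.sub_apply, Matrix.diagonal_apply, Matrix.of_apply]
      push_cast [apply_ite (Int.castRingHom ℝ), eq_intCast]
      congr!
    have hpos : ((1 : Matrix V V ℝ) + G.lapMatrix ℝ).PosDef :=
      Matrix.PosDef.add_posSemidef Matrix.PosDef.one (SimpleGraph.posSemidef_lapMatrix ℝ G)
    have hcast := RingHom.map_det (Int.castRingHom ℝ) ((1 : Matrix V V ℤ) + lap G)
    rw [RingHom.mapMatrix_apply, hmap] at hcast
    intro h0
    have hp := hpos.det_pos
    rw [← hcast, h0] at hp
    simp at hp
  -- the comparison map between the two cokernels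
  obtain ⟨ψ, hψ⟩ : ∃ ψ : coker (1 + lap G) →ₗ[ℤ] coker (lap (cone G)),
      ∀ x : V → ℤ, ψ (Submodule.Quotient.mk x) = Submodule.Quotient.mk (phi V x) := by
    refine ⟨Submodule.mapQ _ _ (phi V) ?_, fun x => rfl⟩
    rintro x ⟨z, rfl⟩
    rw [Submodule.mem_comap, LinearMap.mem_range]
    refine ⟨fun w => Option.elim w 0 z, ?_⟩
    show lap (cone G) *ᵥ _ = phi V ((1 + lap G) *ᵥ z)
    rw [lap_cone_mulVec G _ rfl]
    rfl
  -- injectivity of ψ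
  have hinj : Function.Injective ψ := by
    rw [← LinearMap.ker_eq_bot, LinearMap.ker_eq_bot']
    intro c hc
    obtain ⟨x, rfl⟩ := Submodule.Quotient.mk_surjective _ c
    rw [hψ, Submodule.Quotient.mk_eq_zero] at hc
    obtain ⟨y, hy'⟩ := hc
    have hy : lap (cone G) *ᵥ y = phi V x := hy'
    set y' : Option V → ℤ := y - (fun _ => y none) with hy'def
    have hy0 : y' none = 0 := by simp [hy'def]
    have hyy : lap (cone G) *ᵥ y' = lap (cone G) *ᵥ y := by
      rw [hy'def, Matrix.mulVec_sub, lap_mulVec_const, sub_zero]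
    have hkey := lap_cone_mulVec G y' hy0
    rw [hyy, hy] at hkey
    have hx : x = (1 + lap G) *ᵥ (fun v => y' (some v)) := phi_injective hkey
    rw [Submodule.Quotient.mk_eq_zero]
    refine ⟨fun v => y' (some v), ?_⟩
    show (1 + lap G) *ᵥ (fun v => y' (some v)) = x
    rw [hx]
  -- every element of `coker (1 + lap G)` is torsion
  have htor : ∀ c : coker (1 + lap G), ∃ k : ℤ, k ≠ 0 ∧ k • c = 0 := by
    intro c
    obtain ⟨x, rfl⟩ := Submodule.Quotient.mk_surjective _ c
    refine ⟨((1 : Matrix V V ℤ) + lap G).det, hdet, ?_⟩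
    rw [← Submodule.Quotient.mk_smul, Submodule.Quotient.mk_eq_zero]
    refine ⟨((1 : Matrix V V ℤ) + lap G).adjugate *ᵥ x, ?_⟩
    show (1 + lap G) *ᵥ (((1 : Matrix V V ℤ) + lap G).adjugate *ᵥ x) = _
    rw [Matrix.mulVec_mulVec, Matrix.mul_adjugate, Matrix.smul_mulVec,
      Matrix.one_mulVec]
  -- ψ lands in the torsion submodule
  have hmem : ∀ c : coker (1 + lap G), ψ c ∈ jac (cone G) := by
    intro c
    obtain ⟨k, hk, hkc⟩ := htor c
    refine ⟨⟨k, mem_nonZeroDivisors_of_ne_zero hk⟩, ?_⟩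
    show k • ψ c = 0
    rw [← LinearMap.map_smul, hkc, map_zero]
  set ψ' : coker (1 + lap G) →ₗ[ℤ] jac (cone G) := ψ.codRestrict _ hmem with hψ'def
  have hinj' : Function.Injective ψ' := fun a b h =>
    hinj (congrArg Subtype.val h)
  have hsurj' : Function.Surjective ψ' := by
    rintro ⟨c, hc⟩
    obtain ⟨x, rfl⟩ := Submodule.Quotient.mk_surjective _ c
    obtain ⟨⟨k, hk⟩, hkx⟩ := hc
    have hk0 : k ≠ 0 := nonZeroDivisors.ne_zero hk
    have hkx' : (Submodule.Quotient.mk (k • x) : coker (lap (cone G))) = 0 := by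
      rw [Submodule.Quotient.mk_smul]; exact hkx
    rw [Submodule.Quotient.mk_eq_zero] at hkx'
    obtain ⟨y, hy'⟩ := hkx'
    have hy : lap (cone G) *ᵥ y = k • x := hy'
    have hsum : ∑ w, x w = 0 := by
      have h1 : ∑ w, (k • x) w = 0 := by rw [← hy]; exact sum_lap_mulVec (cone G) y
      simp only [Pi.smul_apply, smul_eq_mul, ← Finset.mul_sum] at h1
      exact (mul_eq_zero.mp h1).resolve_left hk0
    have hx : x = phi V (fun v => x (some v)) := by
      funext w
      cases w with
      | none =>
        rw [phi_apply_none]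
        rw [Fintype.sum_option] at hsum
        have : x none = -∑ v, x (some v) := by linarith
        exact this
      | some v => rfl
    refine ⟨Submodule.Quotient.mk (fun v => x (some v)), ?_⟩
    apply Subtype.ext
    show ψ (Submodule.Quotient.mk (fun v => x (some v))) = Submodule.Quotient.mk x
    rw [hψ, ← hx]
  exact ⟨((LinearEquiv.ofBijective ψ' ⟨hinj', hsurj'⟩).symm).toAddEquiv⟩

theorem jac_cone_iso_coker_one_add_lap
    {V : Type*} [Fintype V] [DecidableEq V] (G : SimpleGraph V) (hG : G.Connected) :
    Nonempty (jac (cone G) ≃+ coker (1 + lap G)) :=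
  jac_cone_aux G
end
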